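/- arXiv:0912.1527 — 4 statements merged into one kernel-verified Lean document; each statement's English description precedes it below -/
import Mathlib

section
/- Let F ∈ ℤ[x1,x2,x3,x4] be a nonsingular homogeneous polynomial of degree k ≥ 3, and let M0 be the natural number from the covering lemma for F. Fix c > 0 and a positive integer m. Suppose M is a positive integer and S = [a1, a1 + (M0·M)^(−1)] × [a2, a2 + (M0·M)^(−1)] × [a3, a3 + (M0·M)^(−1)] ⊆ [−1,1]³ is a subcube of the partition which contains a point (t1,t2,t3) with |F(t1,t2,t3,1)| ≤ (M0·M)^(−1), and that |∂F/∂x3 (a1,a2,a3,1)| ≥ c. Then there exist polynomials Φ_m(u1,u2,w) and Ψ_m(u1,u2,u3,w), such that Φ_m has no constant term, every term of Ψ_m has degree at least m, both polynomials have degree at most D(F,c,m) and all coefficients of modulus at most H(F,c,m) for constants D and H depending only on F, c and m, and such that for every (t1,t2,t3) ∈ S, setting ui = ti − ai for i = 1,2,3 and w = F(t1,t2,t3,1) − F(a1,a2,a3,1), one has u3 = Φ_m(u1,u2,w) + u3·Ψ_m(u1,u2,u3,w). -/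
open MvPolynomial

namespace Stmt7

variable {n : ℕ}

/-- ℓ¹ norm of coefficients. -/
noncomputable def l1 (p : MvPolynomial (Fin n) ℝ) : ℝ := ∑ d ∈ p.support, |p.coeff d|

lemma l1_nonneg (p : MvPolynomial (Fin n) ℝ) : 0 ≤ l1 p :=
  Finset.sum_nonneg fun _ _ => abs_nonneg _

lemma abs_coeff_le_l1 (p : MvPolynomial (Fin n) ℝ) (d) : |p.coeff d| ≤ l1 p := by
  by_cases h : d ∈ p.support
  · exact Finset.single_le_sum (f := fun d => |p.coeff d|) (fun _ _ => abs_nonneg _) h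
  · simp [MvPolynomial.notMem_support_iff.mp h, l1_nonneg]

lemma l1_eq_sum_of_subset {p : MvPolynomial (Fin n) ℝ} {s : Finset ((Fin n) →₀ ℕ)}
    (hs : p.support ⊆ s) : l1 p = ∑ d ∈ s, |p.coeff d| := by
  refine Finset.sum_subset hs (fun d _ hd => ?_)
  simp [MvPolynomial.notMem_support_iff.mp hd]

lemma l1_add_le (p q : MvPolynomial (Fin n) ℝ) : l1 (p + q) ≤ l1 p + l1 q := by
  classical
  rw [l1_eq_sum_of_subset (MvPolynomial.support_add (p := p) (q := q)),
    l1_eq_sum_of_subset (s := p.support ∪ q.support) Finset.subset_union_left,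
    l1_eq_sum_of_subset (s := p.support ∪ q.support) Finset.subset_union_right, ← Finset.sum_add_distrib]
  refine Finset.sum_le_sum fun d _ => ?_
  simp only [MvPolynomial.coeff_add]
  exact abs_add_le _ _

lemma l1_sum_le {α : Type*} (s : Finset α) (f : α → MvPolynomial (Fin n) ℝ) :
    l1 (∑ a ∈ s, f a) ≤ ∑ a ∈ s, l1 (f a) := by
  classical
  induction s using Finset.induction_on with
  | empty => simp [l1]
  | insert _ _ h ih =>
      rw [Finset.sum_insert h, Finset.sum_insert h]
      exact (l1_add_le _ _).trans (by linarith)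

lemma l1_neg (p : MvPolynomial (Fin n) ℝ) : l1 (-p) = l1 p := by
  simp [l1, l1_eq_sum_of_subset, MvPolynomial.support_neg]

lemma l1_sub_le (p q : MvPolynomial (Fin n) ℝ) : l1 (p - q) ≤ l1 p + l1 q := by
  rw [sub_eq_add_neg]
  exact (l1_add_le _ _).trans (by rw [l1_neg])

lemma l1_monomial_le (d : (Fin n) →₀ ℕ) (c : ℝ) : l1 (monomial d c) ≤ |c| := by
  classical
  rcases eq_or_ne c 0 with rfl | h
  · simp [l1]
  · simp [l1, MvPolynomial.support_monomial, h, MvPolynomial.coeff_monomial]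

lemma l1_monomial_mul_le (d : (Fin n) →₀ ℕ) (c : ℝ) (p : MvPolynomial (Fin n) ℝ) :
    l1 (monomial d c * p) ≤ |c| * l1 p := by
  classical
  have hco : ∀ e, (monomial d c * p).coeff (d + e) = c * p.coeff e := fun e =>
    MvPolynomial.coeff_monomial_mul _ _ _ _
  have hsupp : (monomial d c * p).support ⊆ p.support.image (fun e => d + e) := by
    intro e he
    have := MvPolynomial.support_mul _ _ he
    rw [Finset.mem_add] at this
    obtain ⟨e₁, he₁, e₂, he₂, rfl⟩ := this
    have hd : e₁ = d := by
      have := MvPolynomial.support_monomial_subset he₁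
      simpa using this
    subst hd
    exact Finset.mem_image.mpr ⟨e₂, he₂, rfl⟩
  rw [l1_eq_sum_of_subset hsupp, Finset.sum_image (by intro x _ y _ h; exact add_left_cancel h),
    l1, Finset.mul_sum]
  refine Finset.sum_le_sum fun e _ => ?_
  rw [hco, abs_mul]

lemma l1_mul_le (p q : MvPolynomial (Fin n) ℝ) : l1 (p * q) ≤ l1 p * l1 q := by
  classical
  conv_lhs => rw [p.as_sum, Finset.sum_mul]
  refine (l1_sum_le _ _).trans ?_
  rw [l1, Finset.sum_mul]
  exact Finset.sum_le_sum fun d _ => l1_monomial_mul_le d _ q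

lemma l1_C_mul_le (c : ℝ) (p : MvPolynomial (Fin n) ℝ) : l1 (C c * p) ≤ |c| * l1 p := by
  simpa using l1_monomial_mul_le 0 c p

lemma l1_one_le : l1 (1 : MvPolynomial (Fin n) ℝ) ≤ 1 := by
  simpa using l1_monomial_le (0 : (Fin n) →₀ ℕ) (1:ℝ)

lemma l1_pow_le (p : MvPolynomial (Fin n) ℝ) {B : ℝ} (hB : l1 p ≤ B) (h1 : 0 ≤ B) (e : ℕ) :
    l1 (p ^ e) ≤ B ^ e ⊔ 1 := by
  induction e with
  | zero => simpa using l1_one_le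
  | succ e ih =>
      calc l1 (p ^ (e+1)) = l1 (p ^ e * p) := by ring_nf
        _ ≤ l1 (p ^ e) * l1 p := l1_mul_le _ _
        _ ≤ (B ^ e ⊔ 1) * B := by
            apply mul_le_mul ih hB (l1_nonneg _) (le_trans zero_le_one le_sup_right)
        _ ≤ B ^ (e+1) ⊔ 1 := by
            rcases le_total B 1 with h | h
            · calc (B ^ e ⊔ 1) * B ≤ 1 * 1 := by
                    apply mul_le_mul _ h h1 zero_le_one
                    simp [pow_le_one₀ h1 h]
                _ ≤ B ^ (e+1) ⊔ 1 := by simp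
            · have h1e : (1:ℝ) ≤ B ^ e := one_le_pow₀ h
              calc (B ^ e ⊔ 1) * B = B ^ e * B := by rw [sup_eq_left.mpr h1e]
                _ = B ^ (e+1) := by ring
                _ ≤ _ := le_sup_left

lemma l1_X_le (i : Fin n) : l1 (X i : MvPolynomial (Fin n) ℝ) ≤ 1 := by
  exact (by simpa using l1_monomial_le (Finsupp.single i 1) (1:ℝ) :
    l1 (monomial (Finsupp.single i 1) (1:ℝ)) ≤ 1)

variable {l : ℕ}

/-- every monomial has degree at least `j` -/
def MinDeg (p : MvPolynomial (Fin n) ℝ) (j : ℕ) : Prop :=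
  ∀ d ∈ p.support, j ≤ d.sum fun _ e => e

lemma MinDeg.mono {p : MvPolynomial (Fin n) ℝ} {i j : ℕ} (h : MinDeg p j) (hij : i ≤ j) :
    MinDeg p i := fun d hd => hij.trans (h d hd)

lemma MinDeg_zero_poly (j : ℕ) : MinDeg (0 : MvPolynomial (Fin n) ℝ) j := by
  intro d hd; simp at hd

lemma MinDeg.add {p q : MvPolynomial (Fin n) ℝ} {j : ℕ} (hp : MinDeg p j) (hq : MinDeg q j) :
    MinDeg (p + q) j := by
  classical
  intro d hd
  rcases Finset.mem_union.mp (MvPolynomial.support_add hd) with h | h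
  exacts [hp d h, hq d h]

lemma MinDeg.sum {α : Type*} {s : Finset α} {f : α → MvPolynomial (Fin n) ℝ} {j : ℕ}
    (h : ∀ a ∈ s, MinDeg (f a) j) : MinDeg (∑ a ∈ s, f a) j := by
  classical
  induction s using Finset.induction_on with
  | empty => simpa using MinDeg_zero_poly j
  | insert _ _ hns ih =>
      rw [Finset.sum_insert hns]
      exact (h _ (Finset.mem_insert_self _ _)).add
        (ih fun a ha => h a (Finset.mem_insert_of_mem ha))

lemma MinDeg.mul {p q : MvPolynomial (Fin n) ℝ} {i j : ℕ} (hp : MinDeg p i) (hq : MinDeg q j) :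
    MinDeg (p * q) (i + j) := by
  classical
  intro d hd
  have := MvPolynomial.support_mul _ _ hd
  rw [Finset.mem_add] at this
  obtain ⟨e₁, he₁, e₂, he₂, rfl⟩ := this
  rw [Finsupp.sum_add_index (by simp) (by intros; rfl)]
  exact add_le_add (hp _ he₁) (hq _ he₂)

lemma MinDeg.pow {p : MvPolynomial (Fin n) ℝ} {i : ℕ} (hp : MinDeg p i) (e : ℕ) :
    MinDeg (p ^ e) (e * i) := by
  induction e with
  | zero => intro d hd; simp
  | succ e ih =>
      have h2 := ih.mul hp
      rw [pow_succ]
      have : (e + 1) * i = e * i + i := by ring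
      rw [this]
      exact h2

lemma MinDeg_monomial (d : (Fin n) →₀ ℕ) (c : ℝ) : MinDeg (monomial d c) (d.sum fun _ e => e) := by
  classical
  intro e he
  have := MvPolynomial.support_monomial_subset he
  simp only [Finset.mem_singleton] at this
  subst this; rfl

lemma MinDeg_C_mul {p : MvPolynomial (Fin n) ℝ} {j : ℕ} (c : ℝ) (hp : MinDeg p j) :
    MinDeg (C c * p) j := by
  have := (MinDeg_monomial (0 : (Fin n) →₀ ℕ) c).mul hp
  simpa using this

lemma MinDeg_X (i : Fin n) : MinDeg (X i : MvPolynomial (Fin n) ℝ) 1 := by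
  have := MinDeg_monomial (Finsupp.single i 1) (1:ℝ)
  rw [MvPolynomial.X]
  convert this using 2
  simp [Finsupp.sum_single_index]

lemma MinDeg_one_of_constantCoeff {p : MvPolynomial (Fin n) ℝ} (h : constantCoeff p = 0) :
    MinDeg p 1 := by
  intro d hd
  rcases Nat.eq_zero_or_pos (d.sum fun _ e => e) |>.symm with h' | h'
  · exact h'
  · exfalso
    have hd0 : d = 0 := by
      ext i
      by_contra hi
      have : d i ≠ 0 := hi
      have hmem : i ∈ d.support := Finsupp.mem_support_iff.mpr this
      have : 0 < d.sum fun _ e => e :=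
        lt_of_lt_of_le (Nat.pos_of_ne_zero this)
          (Finset.single_le_sum (f := fun i => d i) (fun _ _ => Nat.zero_le _) hmem)
      omega
    subst hd0
    rw [MvPolynomial.mem_support_iff] at hd
    exact hd (by rw [← MvPolynomial.constantCoeff_eq] at *; exact h)

lemma constantCoeff_of_MinDeg {p : MvPolynomial (Fin n) ℝ} {j : ℕ} (hj : 0 < j)
    (h : MinDeg p j) : constantCoeff p = 0 := by
  rw [MvPolynomial.constantCoeff_eq]
  by_contra hc
  have := h 0 (MvPolynomial.mem_support_iff.mpr hc)
  simp at this
  omega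

/-- substituting polynomials without constant term preserves MinDeg -/
lemma MinDeg.aeval {p : MvPolynomial (Fin n) ℝ} {j : ℕ} (hp : MinDeg p j)
    (f : Fin n → MvPolynomial (Fin l) ℝ) (hf : ∀ i, MinDeg (f i) 1) :
    MinDeg (aeval f p) j := by
  classical
  rw [p.as_sum, map_sum]
  refine MinDeg.sum fun d hd => ?_
  rw [MvPolynomial.aeval_monomial]
  have h1 : MinDeg ((algebraMap ℝ (MvPolynomial (Fin l) ℝ)) (coeff d p) *
      d.prod fun i e => f i ^ e) (0 + d.sum fun _ e => e) := by
    refine MinDeg.mul ?_ ?_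
    · simpa using MinDeg_C_mul (p := (1 : MvPolynomial (Fin l) ℝ)) (coeff d p)
        (by simpa using MinDeg_monomial (0 : (Fin l) →₀ ℕ) (1:ℝ))
    · rw [Finsupp.prod]
      have : ∀ s : Finset (Fin n), MinDeg (∏ i ∈ s, f i ^ d i) (∑ i ∈ s, d i) := by
        intro s
        induction s using Finset.induction_on with
        | empty => simpa using MinDeg_monomial (0 : (Fin l) →₀ ℕ) (1:ℝ)
        | insert _ _ hns ih =>
            rw [Finset.prod_insert hns, Finset.sum_insert hns]
            exact MinDeg.mul (by simpa [mul_comm] using (hf _).pow (d _)) ih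
      have h2 := this d.support
      rwa [Finsupp.sum]
  have h3 := h1.mono (le_refl _)
  rw [zero_add] at h3
  exact h3.mono (hp d hd)

/-- degree bound for substitution -/
lemma totalDegree_aeval_le (f : Fin n → MvPolynomial (Fin l) ℝ) (p : MvPolynomial (Fin n) ℝ)
    {B : ℕ} (hf : ∀ i, (f i).totalDegree ≤ B) :
    (aeval f p).totalDegree ≤ p.totalDegree * B := by
  classical
  conv_lhs => rw [p.as_sum, map_sum]
  refine (MvPolynomial.totalDegree_finset_sum _ _).trans ?_
  refine Finset.sup_le fun d hd => ?_
  rw [MvPolynomial.aeval_monomial]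
  refine (MvPolynomial.totalDegree_mul _ _).trans ?_
  have h0 : ((algebraMap ℝ (MvPolynomial (Fin l) ℝ)) (coeff d p)).totalDegree = 0 := by
    simpa using MvPolynomial.totalDegree_C (R := ℝ) (σ := Fin l) (coeff d p)
  rw [h0, zero_add]
  have : ∀ s : Finset (Fin n), (∏ i ∈ s, f i ^ d i).totalDegree ≤ (∑ i ∈ s, d i) * B := by
    intro s
    induction s using Finset.induction_on with
    | empty => simp
    | insert _ _ hns ih =>
        rw [Finset.prod_insert hns, Finset.sum_insert hns]
        refine (MvPolynomial.totalDegree_mul _ _).trans ?_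
        rw [add_mul]
        refine add_le_add ((MvPolynomial.totalDegree_pow _ _).trans ?_) ih
        exact Nat.mul_le_mul_left _ (hf _)
  have h2 : (d.prod fun i e => f i ^ e).totalDegree ≤ (d.sum fun _ e => e) * B := by
    rw [Finsupp.prod, Finsupp.sum]; exact this d.support
  exact h2.trans (Nat.mul_le_mul_right _ (MvPolynomial.le_totalDegree hd))

/-- l1 bound for substitution -/
lemma l1_aeval_le (f : Fin n → MvPolynomial (Fin l) ℝ) (p : MvPolynomial (Fin n) ℝ)
    {B : ℝ} (h1 : 1 ≤ B) (hf : ∀ i, l1 (f i) ≤ B) :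
    l1 (aeval f p) ≤ l1 p * B ^ p.totalDegree := by
  classical
  have hB0 : 0 ≤ B := zero_le_one.trans h1
  conv_lhs => rw [p.as_sum, map_sum]
  refine (l1_sum_le _ _).trans ?_
  rw [l1, Finset.sum_mul]
  refine Finset.sum_le_sum fun d hd => ?_
  rw [MvPolynomial.aeval_monomial]
  refine (l1_mul_le _ _).trans ?_
  have halg : l1 ((algebraMap ℝ (MvPolynomial (Fin l) ℝ)) (coeff d p)) ≤ |coeff d p| := by
    simpa using l1_monomial_le (0 : (Fin l) →₀ ℕ) (coeff d p)
  have hprod : ∀ s : Finset (Fin n), l1 (∏ i ∈ s, f i ^ d i) ≤ B ^ (∑ i ∈ s, d i) := by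
    intro s
    induction s using Finset.induction_on with
    | empty => simpa using l1_one_le
    | insert _ _ hns ih =>
        rw [Finset.prod_insert hns, Finset.sum_insert hns, pow_add]
        refine (l1_mul_le _ _).trans ?_
        refine mul_le_mul ?_ ih (l1_nonneg _) (pow_nonneg hB0 _)
        refine (l1_pow_le _ (hf _) hB0 _).trans ?_
        simp [sup_le_iff, one_le_pow₀ h1]
    
  have h2 : l1 (d.prod fun i e => f i ^ e) ≤ B ^ (d.sum fun _ e => e) := by
    rw [Finsupp.prod, Finsupp.sum]; exact hprod d.support
  calc l1 _ * l1 _ ≤ |coeff d p| * B ^ (d.sum fun _ e => e) :=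
        mul_le_mul halg h2 (l1_nonneg _) (abs_nonneg _)
    _ ≤ |coeff d p| * B ^ p.totalDegree := by
        refine mul_le_mul_of_nonneg_left ?_ (abs_nonneg _)
        exact pow_le_pow_right₀ h1 (MvPolynomial.le_totalDegree hd)

variable {n l r' : ℕ}

lemma eval_aeval (g : Fin l → ℝ) (f : Fin n → MvPolynomial (Fin l) ℝ)
    (p : MvPolynomial (Fin n) ℝ) :
    eval g (aeval f p) = eval (fun i => eval g (f i)) p := by
  induction p using MvPolynomial.induction_on with
  | C a => simp
  | add p q hp hq => simp only [map_add, hp, hq]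
  | mul_X p i hp => simp only [map_mul, aeval_X, eval_mul, eval_X, hp]

lemma aeval_aeval (f : Fin n → MvPolynomial (Fin l) ℝ) (g : Fin l → MvPolynomial (Fin r') ℝ)
    (p : MvPolynomial (Fin n) ℝ) :
    aeval g (aeval f p) = aeval (fun i => aeval g (f i)) p := by
  induction p using MvPolynomial.induction_on with
  | C a => simp
  | add p q hp hq => simp only [map_add, hp, hq]
  | mul_X p i hp => simp only [map_mul, aeval_X, hp]

lemma constantCoeff_aeval (f : Fin n → MvPolynomial (Fin l) ℝ) (p : MvPolynomial (Fin n) ℝ) :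
    constantCoeff (aeval f p) = eval (fun i => constantCoeff (f i)) p := by
  induction p using MvPolynomial.induction_on with
  | C a => simp
  | add p q hp hq => simp only [map_add, hp, hq, eval_add]
  | mul_X p i hp => simp only [map_mul, aeval_X, eval_mul, eval_X, hp]

/-- chain rule -/
lemma pderiv_aeval (f : Fin n → MvPolynomial (Fin l) ℝ) (p : MvPolynomial (Fin n) ℝ) (j : Fin l) :
    pderiv j (aeval f p) = ∑ i, aeval f (pderiv i p) * pderiv j (f i) := by
  induction p using MvPolynomial.induction_on with
  | C a => simp
  | add p q hp hq =>
      simp only [map_add, hp, hq, add_mul, Finset.sum_add_distrib]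
  | mul_X p i hp =>
      simp only [map_mul, aeval_X]
      rw [pderiv_mul, hp, Finset.sum_mul]
      have key : ∀ i' : Fin n, aeval f (pderiv i' (p * X i)) * pderiv j (f i')
          = aeval f (pderiv i' p) * pderiv j (f i') * f i
            + (if i' = i then aeval f p * pderiv j (f i) else 0) := by
        intro i'
        rw [pderiv_mul, pderiv_X]
        rcases eq_or_ne i' i with rfl | h
        · simp [Pi.single_eq_same]; ring
        · simp [Pi.single_eq_of_ne h, h]; ring
      rw [Finset.sum_congr rfl (fun i' _ => key i'), Finset.sum_add_distrib,
        Finset.sum_ite_eq' Finset.univ i (fun _ => aeval f p * pderiv j (f i))]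
      simp [mul_comm]

lemma constantCoeff_pderiv (q : MvPolynomial (Fin n) ℝ) (j : Fin n) :
    constantCoeff (pderiv j q) = coeff (Finsupp.single j 1) q := by
  induction q using MvPolynomial.induction_on' with
  | add p q hp hq => simp [hp, hq]
  | monomial d c =>
      rw [pderiv_monomial, constantCoeff_monomial, coeff_monomial]
      rcases eq_or_ne d (Finsupp.single j 1) with rfl | h
      · simp
      · rw [if_neg h]
        by_cases h0 : d - Finsupp.single j 1 = 0
        · have hle : ∀ i, d i ≤ Finsupp.single j 1 i := by
            intro i
            have := DFunLike.congr_fun h0 i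
            simp only [Finsupp.coe_tsub, Pi.sub_apply, Finsupp.coe_zero, Pi.zero_apply] at this
            omega
          have hdj : d j = 0 := by
            by_contra hdj
            apply h
            ext i
            rcases eq_or_ne i j with rfl | hij
            · have := hle i; simp [Finsupp.single_eq_same] at *; omega
            · have := hle i
              rw [Finsupp.single_apply, if_neg (by exact fun hh => hij hh.symm)] at this ⊢
              omega
          simp [h0, hdj]
        · simp [h0]

lemma coeff_single_aeval_shift (a : Fin l → ℝ) (p : MvPolynomial (Fin l) ℝ) (j : Fin l) :
    coeff (Finsupp.single j 1) (aeval (fun i => C (a i) + X i) p) = eval a (pderiv j p) := by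
  rw [← constantCoeff_pderiv, pderiv_aeval]
  have key : ∀ i, aeval (fun i => C (a i) + X i) (pderiv i p) * pderiv j (C (a i) + X i)
      = if i = j then aeval (fun i' => C (a i') + X i') (pderiv j p) else 0 := by
    intro i
    rw [map_add, pderiv_C, pderiv_X, zero_add]
    rcases eq_or_ne i j with rfl | h
    · simp [Pi.single_eq_same]
    · simp [Pi.single_eq_of_ne h, h]
  rw [Finset.sum_congr rfl (fun i _ => key i),
    Finset.sum_ite_eq' Finset.univ j (fun _ => aeval (fun i' => C (a i') + X i') (pderiv j p))]
  simp only [Finset.mem_univ, if_true]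
  rw [constantCoeff_aeval]
  have : (fun i => constantCoeff (C (a i) + X i)) = a := by
    funext i; simp
  rw [this]

lemma pderiv_aeval_snoc (q : MvPolynomial (Fin 4) ℝ) (j : Fin 3) :
    pderiv j (aeval (Fin.snoc X (1 : MvPolynomial (Fin 3) ℝ)) q)
      = aeval (Fin.snoc X (1 : MvPolynomial (Fin 3) ℝ)) (pderiv (Fin.castSucc j) q) := by
  rw [pderiv_aeval]
  rw [Fin.sum_univ_castSucc]
  simp only [Fin.snoc_castSucc, Fin.snoc_last, pderiv_one, mul_zero, add_zero]
  have key : ∀ i : Fin 3, aeval (Fin.snoc X (1 : MvPolynomial (Fin 3) ℝ))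
        (pderiv (Fin.castSucc i) q) * pderiv j (X i)
      = if i = j then aeval (Fin.snoc X (1 : MvPolynomial (Fin 3) ℝ)) (pderiv (Fin.castSucc j) q)
        else 0 := by
    intro i
    rw [pderiv_X]
    rcases eq_or_ne i j with rfl | h
    · simp [Pi.single_eq_same]
    · simp [Pi.single_eq_of_ne h, h]
  rw [Finset.sum_congr rfl (fun i _ => key i),
    Finset.sum_ite_eq' Finset.univ j _]
  simp

/-- kill the exponent of variable `2` -/
noncomputable def trunc (d : Fin 4 →₀ ℕ) : Fin 4 →₀ ℕ := d - Finsupp.single 2 (d 2)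

/-- divided difference in the variable `X 2` -/
noncomputable def delta (s r : MvPolynomial (Fin 4) ℝ) : MvPolynomial (Fin 4) ℝ :=
  ∑ d ∈ s.support, monomial (trunc d) (s.coeff d) *
    ∑ i ∈ Finset.range (d 2), X 2 ^ i * r ^ (d 2 - 1 - i)

/-- substitute `r` for the variable `X 2` -/
noncomputable def rep (r : MvPolynomial (Fin 4) ℝ) :
    MvPolynomial (Fin 4) ℝ →ₐ[ℝ] MvPolynomial (Fin 4) ℝ :=
  aeval ![X 0, X 1, r, X 3]

lemma degsum (d : Fin 4 →₀ ℕ) : (d.sum fun _ e => e) = d 0 + d 1 + d 2 + d 3 := by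
  rw [Finsupp.sum_fintype _ _ (fun _ => rfl), Fin.sum_univ_four]

lemma trunc_apply (d : Fin 4 →₀ ℕ) (i : Fin 4) :
    trunc d i = if i = 2 then 0 else d i := by
  rw [trunc, Finsupp.tsub_apply, Finsupp.single_apply]
  rcases eq_or_ne i 2 with rfl | h
  · simp
  · rw [if_neg (fun hh => h hh.symm), if_neg h]
    rfl

lemma degsum_trunc (d : Fin 4 →₀ ℕ) :
    ((trunc d).sum fun _ e => e) = (d.sum fun _ e => e) - d 2 := by
  rw [degsum, degsum, trunc_apply, trunc_apply, trunc_apply, trunc_apply,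
    if_neg (by decide : ¬(0:Fin 4) = 2), if_neg (by decide : ¬(1:Fin 4) = 2),
    if_pos rfl, if_neg (by decide : ¬(3:Fin 4) = 2)]
  omega

lemma d2_le_degsum (d : Fin 4 →₀ ℕ) : d 2 ≤ d.sum fun _ e => e := by
  rw [degsum]; omega

lemma trunc_add_single (d : Fin 4 →₀ ℕ) :
    trunc d + Finsupp.single 2 (d 2) = d := by
  ext i
  rw [Finsupp.add_apply, trunc_apply, Finsupp.single_apply]
  rcases eq_or_ne i 2 with rfl | h
  · simp
  · rw [if_neg h, if_neg (fun hh => h hh.symm), add_zero]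

lemma td_monomial_le (d : Fin 4 →₀ ℕ) (c : ℝ) :
    (monomial d c).totalDegree ≤ d.sum fun _ e => e := by
  rcases eq_or_ne c 0 with rfl | h
  · simp
  · rw [MvPolynomial.totalDegree_monomial _ h]

lemma monomial_split (d : Fin 4 →₀ ℕ) (c : ℝ) :
    monomial d c = monomial (trunc d) c * (X 2 : MvPolynomial (Fin 4) ℝ) ^ (d 2) := by
  rw [X_pow_eq_monomial, monomial_mul, mul_one, trunc_add_single]

lemma rep_monomial (r : MvPolynomial (Fin 4) ℝ) (d : Fin 4 →₀ ℕ) (c : ℝ) :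
    rep r (monomial d c) = monomial (trunc d) c * r ^ (d 2) := by
  rw [rep, aeval_monomial, monomial_eq]
  rw [Finsupp.prod_pow, Finsupp.prod_pow, Fin.prod_univ_four, Fin.prod_univ_four]
  have e0 : trunc d 0 = d 0 := by rw [trunc_apply, if_neg (by decide : ¬(0:Fin 4) = 2)]
  have e1 : trunc d 1 = d 1 := by rw [trunc_apply, if_neg (by decide : ¬(1:Fin 4) = 2)]
  have e2 : trunc d 2 = 0 := by rw [trunc_apply, if_pos rfl]
  have e3 : trunc d 3 = d 3 := by rw [trunc_apply, if_neg (by decide : ¬(3:Fin 4) = 2)]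
  rw [e0, e1, e2, e3]
  simp only [Matrix.cons_val_zero, Matrix.cons_val_one, Matrix.head_cons, pow_zero]
  have h2 : (![X 0, X 1, r, X 3] : Fin 4 → MvPolynomial (Fin 4) ℝ) 2 = r := rfl
  have h3 : (![X 0, X 1, r, X 3] : Fin 4 → MvPolynomial (Fin 4) ℝ) 3 = X 3 := rfl
  rw [h2, h3]
  have : (algebraMap ℝ (MvPolynomial (Fin 4) ℝ)) c = C c := rfl
  rw [this]
  ring

lemma delta_spec (s r : MvPolynomial (Fin 4) ℝ) :
    (X 2 - r) * delta s r = s - rep r s := by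
  rw [delta, Finset.mul_sum]
  conv_rhs => rw [s.as_sum, map_sum, ← Finset.sum_sub_distrib]
  refine Finset.sum_congr rfl fun d hd => ?_
  rw [rep_monomial]
  conv_rhs => rw [monomial_split d (s.coeff d)]
  have hg := geom_sum₂_mul (X 2 : MvPolynomial (Fin 4) ℝ) r (d 2)
  linear_combination (monomial (trunc d) (s.coeff d)) * hg

lemma MinDeg_delta {s r : MvPolynomial (Fin 4) ℝ} {dn : ℕ}
    (hs : MinDeg s (dn + 1)) (hr : MinDeg r 1) : MinDeg (delta s r) dn := by
  rw [delta]
  refine MinDeg.sum fun d hd => ?_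
  have hdeg : dn + 1 ≤ d.sum fun _ e => e := hs d hd
  have h1 : MinDeg (∑ i ∈ Finset.range (d 2), (X 2 : MvPolynomial (Fin 4) ℝ) ^ i * r ^ (d 2 - 1 - i))
      (d 2 - 1) := by
    refine MinDeg.sum fun i hi => ?_
    rw [Finset.mem_range] at hi
    have hx : MinDeg ((X 2 : MvPolynomial (Fin 4) ℝ) ^ i) i := by
      have := (MinDeg_X (2 : Fin 4)).pow i
      rwa [mul_one] at this
    have hrp : MinDeg (r ^ (d 2 - 1 - i)) (d 2 - 1 - i) := by
      have := hr.pow (d 2 - 1 - i)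
      rwa [mul_one] at this
    have := hx.mul hrp
    exact this.mono (by omega)
  have h2 := (MinDeg_monomial (trunc d) (s.coeff d)).mul h1
  refine h2.mono ?_
  rw [degsum_trunc]
  have := d2_le_degsum d
  omega

lemma l1_delta_le {s r : MvPolynomial (Fin 4) ℝ} {B : ℝ} (hB : 1 ≤ B) (hr : l1 r ≤ B) :
    l1 (delta s r) ≤ l1 s * ((s.totalDegree : ℝ) * B ^ s.totalDegree) := by
  have hB0 : (0:ℝ) ≤ B := zero_le_one.trans hB
  rw [delta]
  refine (l1_sum_le _ _).trans ?_
  rw [l1, Finset.sum_mul]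
  refine Finset.sum_le_sum fun d hd => ?_
  refine (l1_mul_le _ _).trans ?_
  refine mul_le_mul (l1_monomial_le _ _) ?_ (l1_nonneg _) (abs_nonneg _)
  refine (l1_sum_le _ _).trans ?_
  have hterm : ∀ i ∈ Finset.range (d 2),
      l1 ((X 2 : MvPolynomial (Fin 4) ℝ) ^ i * r ^ (d 2 - 1 - i)) ≤ B ^ s.totalDegree := by
    intro i hi
    refine (l1_mul_le _ _).trans ?_
    have hx : l1 ((X 2 : MvPolynomial (Fin 4) ℝ) ^ i) ≤ 1 := by
      have := l1_pow_le (X 2 : MvPolynomial (Fin 4) ℝ) (l1_X_le 2) zero_le_one i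
      simpa using this
    have hrp : l1 (r ^ (d 2 - 1 - i)) ≤ B ^ (d 2 - 1 - i) := by
      have := l1_pow_le r hr hB0 (d 2 - 1 - i)
      exact this.trans (by simp [sup_le_iff, one_le_pow₀ hB])
    calc l1 ((X 2:MvPolynomial (Fin 4) ℝ) ^ i) * l1 (r ^ (d 2 - 1 - i)) ≤ 1 * B ^ (d 2 - 1 - i) :=
          mul_le_mul hx hrp (l1_nonneg _) zero_le_one
      _ = B ^ (d 2 - 1 - i) := one_mul _
      _ ≤ B ^ s.totalDegree := by
          refine pow_le_pow_right₀ hB ?_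
          have h1 : d 2 ≤ s.totalDegree :=
            le_trans (d2_le_degsum d) (MvPolynomial.le_totalDegree hd)
          exact ((Nat.sub_le _ _).trans (Nat.sub_le _ _)).trans h1
  refine (Finset.sum_le_sum hterm).trans ?_
  rw [Finset.sum_const, Finset.card_range, nsmul_eq_mul]
  refine mul_le_mul_of_nonneg_right ?_ (pow_nonneg hB0 _)
  exact Nat.cast_le.mpr (le_trans (d2_le_degsum d) (MvPolynomial.le_totalDegree hd))

lemma totalDegree_delta_le (s r : MvPolynomial (Fin 4) ℝ) :
    (delta s r).totalDegree ≤ s.totalDegree * (2 + r.totalDegree) := by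
  rw [delta]
  refine (MvPolynomial.totalDegree_finset_sum _ _).trans ?_
  refine Finset.sup_le fun d hd => ?_
  refine (MvPolynomial.totalDegree_mul _ _).trans ?_
  have hm : (monomial (trunc d) (s.coeff d)).totalDegree ≤ s.totalDegree := by
    refine (td_monomial_le _ _).trans ?_
    rw [degsum_trunc]
    have := MvPolynomial.le_totalDegree hd
    omega
  have hsum : (∑ i ∈ Finset.range (d 2),
      (X 2 : MvPolynomial (Fin 4) ℝ) ^ i * r ^ (d 2 - 1 - i)).totalDegree
      ≤ s.totalDegree * (1 + r.totalDegree) := by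
    refine (MvPolynomial.totalDegree_finset_sum _ _).trans ?_
    refine Finset.sup_le fun i hi => ?_
    rw [Finset.mem_range] at hi
    refine (MvPolynomial.totalDegree_mul _ _).trans ?_
    have hx : ((X 2 : MvPolynomial (Fin 4) ℝ) ^ i).totalDegree ≤ i :=
      (MvPolynomial.totalDegree_pow _ _).trans (by simp)
    have hrp : (r ^ (d 2 - 1 - i)).totalDegree ≤ (d 2 - 1 - i) * r.totalDegree :=
      MvPolynomial.totalDegree_pow _ _
    have hd2 : d 2 ≤ s.totalDegree := le_trans (d2_le_degsum d) (MvPolynomial.le_totalDegree hd)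
    have hfin : i + (d 2 - 1 - i) * r.totalDegree ≤ s.totalDegree * (1 + r.totalDegree) := by
      have h1 : i ≤ s.totalDegree := by omega
      have h2 : (d 2 - 1 - i) ≤ s.totalDegree := by omega
      calc i + (d 2 - 1 - i) * r.totalDegree
          ≤ s.totalDegree + s.totalDegree * r.totalDegree :=
            Nat.add_le_add h1 (Nat.mul_le_mul_right _ h2)
        _ = s.totalDegree * (1 + r.totalDegree) := by ring
    exact le_trans (Nat.add_le_add hx hrp) hfin
  calc _ ≤ s.totalDegree + s.totalDegree * (1 + r.totalDegree) := Nat.add_le_add hm hsum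
    _ = s.totalDegree * (2 + r.totalDegree) := by ring

/-- lift a polynomial in `u₁,u₂,w` to `u₁,u₂,u₃,w` -/
noncomputable def lift3 : MvPolynomial (Fin 3) ℝ →ₐ[ℝ] MvPolynomial (Fin 4) ℝ :=
  aeval ![X 0, X 1, X 3]

/-- Newton-type iteration -/
noncomputable def xr (Φ₁ : MvPolynomial (Fin 3) ℝ) (Ψ₁ : MvPolynomial (Fin 4) ℝ) :
    ℕ → MvPolynomial (Fin 3) ℝ
  | 0 => 0
  | (j+1) => Φ₁ + aeval ![X 0, X 1, xr Φ₁ Ψ₁ j, X 2] Ψ₁ * xr Φ₁ Ψ₁ j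

noncomputable def qr (Φ₁ : MvPolynomial (Fin 3) ℝ) (Ψ₁ : MvPolynomial (Fin 4) ℝ) (j : ℕ) :
    MvPolynomial (Fin 4) ℝ :=
  delta (X 2 * Ψ₁) (lift3 (xr Φ₁ Ψ₁ j))

noncomputable def Psir (Φ₁ : MvPolynomial (Fin 3) ℝ) (Ψ₁ : MvPolynomial (Fin 4) ℝ) (mm : ℕ) :
    MvPolynomial (Fin 4) ℝ :=
  ∏ j ∈ Finset.range mm, qr Φ₁ Ψ₁ j

lemma lift3_aeval (r : MvPolynomial (Fin 3) ℝ) (Ψ₁ : MvPolynomial (Fin 4) ℝ) :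
    lift3 (aeval ![X 0, X 1, r, X 2] Ψ₁) = rep (lift3 r) Ψ₁ := by
  rw [lift3, rep, aeval_aeval]
  have hfun : (fun i => (aeval (R := ℝ) ![X 0, X 1, (X 3 : MvPolynomial (Fin 4) ℝ)])
      (![X 0, X 1, r, X 2] i)) = ![X 0, X 1, aeval ![X 0, X 1, X 3] r, X 3] := by
    funext i
    fin_cases i <;> simp
  rw [hfun]

lemma substG4_lift3 (G : MvPolynomial (Fin 3) ℝ) (p : MvPolynomial (Fin 3) ℝ) :
    aeval ![X 0, X 1, X 2, G] (lift3 p) = aeval ![X 0, X 1, G] p := by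
  rw [lift3, aeval_aeval]
  have hfun : (fun i => (aeval (R := ℝ) ![X 0, X 1, (X 2 : MvPolynomial (Fin 3) ℝ), G])
      (![X 0, X 1, X 3] i)) = ![X 0, X 1, G] := by
    funext i
    fin_cases i <;> simp
  rw [hfun]

lemma main_identity (G Φ₁ : MvPolynomial (Fin 3) ℝ) (Ψ₁ : MvPolynomial (Fin 4) ℝ)
    (base : (X 2 : MvPolynomial (Fin 3) ℝ)
      = aeval ![X 0, X 1, G] Φ₁ + X 2 * aeval ![X 0, X 1, X 2, G] Ψ₁) (j : ℕ) :
    aeval ![X 0, X 1, X 2, G] ((X 2 : MvPolynomial (Fin 4) ℝ) - lift3 (xr Φ₁ Ψ₁ j))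
      = X 2 * aeval ![X 0, X 1, X 2, G] (Psir Φ₁ Ψ₁ j) := by
  induction j with
  | zero =>
      simp only [xr, Psir, Finset.range_zero, Finset.prod_empty, map_one, mul_one, map_sub,
        map_zero, sub_zero, aeval_X]
      rfl
  | succ j ih =>
      have hrepX : rep (lift3 (xr Φ₁ Ψ₁ j)) (X 2) = lift3 (xr Φ₁ Ψ₁ j) := by
        rw [rep, aeval_X]; rfl
      have hstep : (X 2 : MvPolynomial (Fin 4) ℝ) - lift3 (xr Φ₁ Ψ₁ (j+1))
          = (X 2 - lift3 Φ₁ - X 2 * Ψ₁)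
            + (X 2 - lift3 (xr Φ₁ Ψ₁ j)) * qr Φ₁ Ψ₁ j := by
        have hds := delta_spec (X 2 * Ψ₁) (lift3 (xr Φ₁ Ψ₁ j))
        rw [qr]
        have hx : lift3 (xr Φ₁ Ψ₁ (j+1))
            = lift3 Φ₁ + rep (lift3 (xr Φ₁ Ψ₁ j)) Ψ₁ * lift3 (xr Φ₁ Ψ₁ j) := by
          show lift3 (Φ₁ + aeval ![X 0, X 1, xr Φ₁ Ψ₁ j, X 2] Ψ₁ * xr Φ₁ Ψ₁ j) = _
          rw [map_add, map_mul, lift3_aeval]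
        rw [hx]
        have hrepP : rep (lift3 (xr Φ₁ Ψ₁ j)) (X 2 * Ψ₁)
            = lift3 (xr Φ₁ Ψ₁ j) * rep (lift3 (xr Φ₁ Ψ₁ j)) Ψ₁ := by
          rw [map_mul, hrepX]
        linear_combination -hds + hrepP
      rw [hstep, map_add, map_mul]
      have hbase0 : aeval ![X 0, X 1, X 2, G]
          ((X 2 : MvPolynomial (Fin 4) ℝ) - lift3 Φ₁ - X 2 * Ψ₁) = 0 := by
        rw [map_sub, map_sub, map_mul, substG4_lift3]
        have hX2 : aeval ![X 0, X 1, X 2, G] (X 2 : MvPolynomial (Fin 4) ℝ)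
            = (X 2 : MvPolynomial (Fin 3) ℝ) := by rw [aeval_X]; rfl
        rw [hX2]
        linear_combination base
      have hps : Psir Φ₁ Ψ₁ (j+1) = Psir Φ₁ Ψ₁ j * qr Φ₁ Ψ₁ j := Finset.prod_range_succ _ _
      rw [hbase0, zero_add, ih, hps, map_mul]
      ring

noncomputable def Cx (A : ℝ) (K : ℕ) : ℕ → ℝ
  | 0 => 1
  | (j+1) => A * (1 + Cx A K j ^ (K+1))

def Dx (K : ℕ) : ℕ → ℕ
  | 0 => 0
  | (j+1) => K * (Dx K j + 1) + Dx K j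

lemma Cx_ge_one {A : ℝ} (hA : 1 ≤ A) (K : ℕ) : ∀ j, 1 ≤ Cx A K j
  | 0 => le_refl 1
  | (j+1) => by
      rw [Cx]
      have h1 : (1:ℝ) ≤ Cx A K j := Cx_ge_one hA K j
      nlinarith [pow_nonneg (zero_le_one.trans h1) (K+1)]

lemma Cx_mono {A : ℝ} (hA : 1 ≤ A) (K : ℕ) : Monotone (Cx A K) := by
  apply monotone_nat_of_le_succ
  intro j
  rw [Cx]
  have h1 : (1:ℝ) ≤ Cx A K j := Cx_ge_one hA K j
  have h2 : Cx A K j ≤ Cx A K j ^ (K+1) := le_self_pow₀ h1 (by omega)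
  nlinarith

lemma Dx_mono (K : ℕ) : Monotone (Dx K) := by
  apply monotone_nat_of_le_succ
  intro j
  rw [Dx]
  omega

section recursion_bounds

variable {Φ₁ : MvPolynomial (Fin 3) ℝ} {Ψ₁ : MvPolynomial (Fin 4) ℝ} {A : ℝ} {K : ℕ}

lemma xr_constantCoeff (h : constantCoeff Φ₁ = 0) (j : ℕ) :
    constantCoeff (xr Φ₁ Ψ₁ j) = 0 := by
  induction j with
  | zero => rw [xr]; simp
  | succ j ih => rw [xr, map_add, map_mul, ih, mul_zero, add_zero, h]

lemma xr_deg (hK : 1 ≤ K) (hΦ : Φ₁.totalDegree ≤ K) (hΨ : Ψ₁.totalDegree ≤ K) (j : ℕ) :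
    (xr Φ₁ Ψ₁ j).totalDegree ≤ Dx K j := by
  induction j with
  | zero => rw [xr, Dx]; simp
  | succ j ih =>
      rw [xr, Dx]
      refine (MvPolynomial.totalDegree_add _ _).trans ?_
      rw [max_le_iff]
      constructor
      · calc Φ₁.totalDegree ≤ K := hΦ
          _ ≤ K * (Dx K j + 1) + Dx K j := by nlinarith
      · refine (MvPolynomial.totalDegree_mul _ _).trans ?_
        have haev : (aeval ![X 0, X 1, xr Φ₁ Ψ₁ j, X 2] Ψ₁).totalDegree
            ≤ Ψ₁.totalDegree * (Dx K j + 1) := by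
          refine totalDegree_aeval_le _ _ ?_
          intro i
          fin_cases i <;>
            simp only [Matrix.cons_val_zero, Matrix.cons_val_one, Matrix.head_cons,
              Matrix.cons_val_two, Matrix.tail_cons, Matrix.cons_val_three] <;>
            first
              | exact (MvPolynomial.totalDegree_X _).le.trans (by omega)
              | exact ih.trans (by omega)
        calc (aeval ![X 0, X 1, xr Φ₁ Ψ₁ j, X 2] Ψ₁).totalDegree + (xr Φ₁ Ψ₁ j).totalDegree
            ≤ Ψ₁.totalDegree * (Dx K j + 1) + Dx K j := Nat.add_le_add haev ih
          _ ≤ K * (Dx K j + 1) + Dx K j := by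
              have := Nat.mul_le_mul_right (Dx K j + 1) hΨ
              omega

lemma xr_l1 (hA : 1 ≤ A) (hΦ : l1 Φ₁ ≤ A) (hΨ : l1 Ψ₁ ≤ A) (hΨd : Ψ₁.totalDegree ≤ K)
    (j : ℕ) : l1 (xr Φ₁ Ψ₁ j) ≤ Cx A K j := by
  induction j with
  | zero => rw [xr, Cx]; simp [l1]
  | succ j ih =>
      rw [xr, Cx]
      refine (l1_add_le _ _).trans ?_
      have hCx1 : (1:ℝ) ≤ Cx A K j := Cx_ge_one hA K j
      have haev : l1 (aeval ![X 0, X 1, xr Φ₁ Ψ₁ j, X 2] Ψ₁) ≤ A * Cx A K j ^ K := by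
        have hcomp : ∀ i, l1 ((![X 0, X 1, xr Φ₁ Ψ₁ j, X 2] :
            Fin 4 → MvPolynomial (Fin 3) ℝ) i) ≤ Cx A K j := by
          intro i
          fin_cases i <;>
            simp only [Matrix.cons_val_zero, Matrix.cons_val_one, Matrix.head_cons,
              Matrix.cons_val_two, Matrix.tail_cons, Matrix.cons_val_three] <;>
            first
              | exact (l1_X_le _).trans hCx1
              | exact ih
        refine (l1_aeval_le _ _ hCx1 hcomp).trans ?_
        refine mul_le_mul hΨ (pow_le_pow_right₀ hCx1 hΨd) (pow_nonneg (by linarith) _) (by linarith)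
      calc l1 Φ₁ + l1 (aeval ![X 0, X 1, xr Φ₁ Ψ₁ j, X 2] Ψ₁ * xr Φ₁ Ψ₁ j)
          ≤ A + (A * Cx A K j ^ K) * Cx A K j := by
            refine add_le_add hΦ ((l1_mul_le _ _).trans ?_)
            refine mul_le_mul haev ih (l1_nonneg _) ?_
            positivity
        _ = A * (1 + Cx A K j ^ (K+1)) := by ring
  
lemma lift3_l1_le (p : MvPolynomial (Fin 3) ℝ) : l1 (lift3 p) ≤ l1 p := by
  rw [lift3]
  have h := l1_aeval_le (![X 0, X 1, X 3] : Fin 3 → MvPolynomial (Fin 4) ℝ) p le_rfl ?_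
  · simpa using h
  · intro i; fin_cases i <;> simpa using l1_X_le _
  
lemma lift3_deg_le (p : MvPolynomial (Fin 3) ℝ) : (lift3 p).totalDegree ≤ p.totalDegree := by
  rw [lift3]
  have h := totalDegree_aeval_le (![X 0, X 1, X 3] : Fin 3 → MvPolynomial (Fin 4) ℝ) p
    (B := 1) ?_
  · simpa using h
  · intro i; fin_cases i <;> simp

lemma lift3_MinDeg {p : MvPolynomial (Fin 3) ℝ} {j : ℕ} (h : MinDeg p j) :
    MinDeg (lift3 p) j := by
  rw [lift3]
  refine h.aeval _ ?_
  intro i; fin_cases i <;> simpa using MinDeg_X _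

lemma MinDeg_prod {f : ℕ → MvPolynomial (Fin 4) ℝ} {mm : ℕ}
    (h : ∀ j, j < mm → MinDeg (f j) 1) : MinDeg (∏ j ∈ Finset.range mm, f j) mm := by
  induction mm with
  | zero => simpa using MinDeg_monomial (0 : Fin 4 →₀ ℕ) (1:ℝ)
  | succ mm ih =>
      rw [Finset.prod_range_succ]
      exact (ih (fun j hj => h j (by omega))).mul (h mm (by omega))

lemma l1_prod_le {f : ℕ → MvPolynomial (Fin 4) ℝ} {mm : ℕ} {bd : ℝ} (hbd : 1 ≤ bd)
    (h : ∀ j, j < mm → l1 (f j) ≤ bd) : l1 (∏ j ∈ Finset.range mm, f j) ≤ bd ^ mm := by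
  induction mm with
  | zero => simpa using l1_one_le
  | succ mm ih =>
      rw [Finset.prod_range_succ, pow_succ]
      exact (l1_mul_le _ _).trans
        (mul_le_mul (ih (fun j hj => h j (by omega))) (h mm (by omega)) (l1_nonneg _)
          (pow_nonneg (by linarith) _))

lemma deg_prod_le {f : ℕ → MvPolynomial (Fin 4) ℝ} {mm bd : ℕ}
    (h : ∀ j, j < mm → (f j).totalDegree ≤ bd) :
    (∏ j ∈ Finset.range mm, f j).totalDegree ≤ mm * bd := by
  induction mm with
  | zero => simp
  | succ mm ih =>
      rw [Finset.prod_range_succ]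
      refine (MvPolynomial.totalDegree_mul _ _).trans ?_
      calc _ ≤ mm * bd + bd :=
            Nat.add_le_add (ih (fun j hj => h j (by omega))) (h mm (by omega))
        _ = (mm + 1) * bd := by ring

end recursion_bounds

lemma degsum3 (d : Fin 3 →₀ ℕ) : (d.sum fun _ e => e) = d 0 + d 1 + d 2 := by
  rw [Finsupp.sum_fintype _ _ (fun _ => rfl), Fin.sum_univ_three]

theorem key (k mm : ℕ) (hk : 1 ≤ k) (c B : ℝ) (hc : 0 < c) (hB : 1 ≤ B) :
    ∃ (D : ℕ) (H : ℝ), ∀ G : MvPolynomial (Fin 3) ℝ,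
      constantCoeff G = 0 → G.totalDegree ≤ k → l1 G ≤ B →
      c ≤ |G.coeff (Finsupp.single 2 1)| →
      ∃ (Φ : MvPolynomial (Fin 3) ℝ) (Ψ : MvPolynomial (Fin 4) ℝ),
        Φ.coeff 0 = 0 ∧ MinDeg Ψ mm ∧ Φ.totalDegree ≤ D ∧ Ψ.totalDegree ≤ D ∧
        (∀ d, |Φ.coeff d| ≤ H) ∧ (∀ d, |Ψ.coeff d| ≤ H) ∧
        (X 2 : MvPolynomial (Fin 3) ℝ)
          = aeval ![X 0, X 1, G] Φ + X 2 * aeval ![X 0, X 1, X 2, G] Ψ := by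
  have hcinv : (0:ℝ) < c⁻¹ := inv_pos.mpr hc
  set K : ℕ := 2*k + 2 with hK
  set A : ℝ := c⁻¹ * (1 + 6*B) + c⁻¹ * (4*B*K) + 1 with hA
  have hA1 : 1 ≤ A := by
    have h1 : (0:ℝ) ≤ c⁻¹ * (1 + 6*B) := by positivity
    have h2 : (0:ℝ) ≤ c⁻¹ * (4*B*K) := by positivity
    simp only [hA]; linarith
  set BB : ℝ := Cx A K mm with hBB
  have hBB1 : 1 ≤ BB := Cx_ge_one hA1 K mm
  set Aq : ℝ := A * (K * BB ^ K) with hAq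
  have hK1 : (1:ℕ) ≤ K := by omega
  have hAq1 : 1 ≤ Aq := by
    have h1 : (1:ℝ) ≤ (K:ℝ) := by exact_mod_cast hK1
    have h2 : (1:ℝ) ≤ BB ^ K := one_le_pow₀ hBB1
    have h3 : (1:ℝ)*(1*1) ≤ A * ((K:ℝ) * BB ^ K) := by
      refine mul_le_mul hA1 ?_ (by norm_num) (by linarith)
      refine mul_le_mul h1 h2 zero_le_one (by linarith)
    rw [hAq]
    linarith
  refine ⟨mm * (K * (2 + Dx K mm)) + Dx K mm, BB + Aq ^ mm, ?_⟩
  intro G hG0 hGd hGl hGc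
  have hBpos : (0:ℝ) < B := lt_of_lt_of_le zero_lt_one hB
  set L0 := G.coeff (Finsupp.single 0 1) with hL0
  set L1c := G.coeff (Finsupp.single 1 1) with hL1c
  set L2c := G.coeff (Finsupp.single 2 1) with hL2c
  have hL2ne : L2c ≠ 0 := by
    intro h; rw [h] at hGc; simp at hGc; linarith
  have habsinv : |L2c|⁻¹ ≤ c⁻¹ := by
    apply inv_anti₀ hc hGc
  have habsL : ∀ i : Fin 3, |G.coeff (Finsupp.single i 1)| ≤ B :=
    fun i => (abs_coeff_le_l1 G _).trans hGl
  set Q : MvPolynomial (Fin 3) ℝ :=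
    G - (C L0 * X 0 + C L1c * X 1 + C L2c * X 2) with hQdef
  -- coefficients of Q in low degrees vanish
  have hQ0 : Q.coeff 0 = 0 := by
    rw [hQdef]
    simp only [coeff_sub, coeff_add, coeff_C_mul, coeff_zero_X, mul_zero, add_zero]
    rw [← MvPolynomial.constantCoeff_eq] at *
    simpa using hG0
  have hQsingle : ∀ i : Fin 3, Q.coeff (Finsupp.single i 1) = 0 := by
    intro i
    rw [hQdef]
    simp only [coeff_sub, coeff_add, coeff_C_mul, MvPolynomial.coeff_X']
    fin_cases i <;>
      simp [Finsupp.single_left_inj, Finsupp.single_eq_single_iff, hL0, hL1c, hL2c]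
  have hQ2 : MinDeg Q 2 := by
    intro d hd
    by_contra hlt
    push_neg at hlt
    rw [MvPolynomial.mem_support_iff] at hd
    apply hd
    have hs3 := degsum3 d
    have hcase : (d 0 = 0 ∧ d 1 = 0 ∧ d 2 = 0)
        ∨ (d 0 = 1 ∧ d 1 = 0 ∧ d 2 = 0)
        ∨ (d 0 = 0 ∧ d 1 = 1 ∧ d 2 = 0)
        ∨ (d 0 = 0 ∧ d 1 = 0 ∧ d 2 = 1) := by omega
    rcases hcase with ⟨h0, h1, h2⟩ | ⟨h0, h1, h2⟩ | ⟨h0, h1, h2⟩ | ⟨h0, h1, h2⟩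
    · have hd0 : d = 0 := by
        ext i; fin_cases i <;> assumption
      rw [hd0]; exact hQ0
    · have hd0 : d = Finsupp.single 0 1 := by
        ext i
        fin_cases i <;> simp [Finsupp.single_apply] <;> assumption
      rw [hd0]; exact hQsingle 0
    · have hd0 : d = Finsupp.single 1 1 := by
        ext i
        fin_cases i <;> simp [Finsupp.single_apply] <;> assumption
      rw [hd0]; exact hQsingle 1
    · have hd0 : d = Finsupp.single 2 1 := by
        ext i
        fin_cases i <;> simp [Finsupp.single_apply] <;> assumption
      rw [hd0]; exact hQsingle 2
  -- degree and norm bounds for Q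
  have hlin_deg : ∀ (L : ℝ) (i : Fin 3),
      ((C L * X i : MvPolynomial (Fin 3) ℝ)).totalDegree ≤ 1 := by
    intro L i
    refine (MvPolynomial.totalDegree_mul _ _).trans ?_
    simp [MvPolynomial.totalDegree_X]
  have hQdeg : Q.totalDegree ≤ k := by
    rw [hQdef, sub_eq_add_neg]
    refine (MvPolynomial.totalDegree_add _ _).trans ?_
    rw [max_le_iff]
    refine ⟨hGd, ?_⟩
    rw [MvPolynomial.totalDegree_neg]
    refine (MvPolynomial.totalDegree_add _ _).trans ?_
    rw [max_le_iff]
    constructor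
    · exact (MvPolynomial.totalDegree_add _ _).trans
        (max_le ((hlin_deg _ _).trans hk) ((hlin_deg _ _).trans hk))
    · exact (hlin_deg _ _).trans hk
  have hlin_l1 : ∀ (i : Fin 3), l1 ((C (G.coeff (Finsupp.single i 1)) * X i :
      MvPolynomial (Fin 3) ℝ)) ≤ B := by
    intro i
    refine (l1_C_mul_le _ _).trans ?_
    calc |G.coeff (Finsupp.single i 1)| * l1 (X i) ≤ B * 1 :=
        mul_le_mul (habsL i) (l1_X_le i) (l1_nonneg _) (by linarith)
      _ = B := mul_one B
  have hQl1 : l1 Q ≤ 4*B := by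
    rw [hQdef]
    refine (l1_sub_le _ _).trans ?_
    have h2 : l1 ((C L0 * X 0 + C L1c * X 1 + C L2c * X 2 : MvPolynomial (Fin 3) ℝ)) ≤ 3*B := by
      refine (l1_add_le _ _).trans ?_
      have := (l1_add_le (C L0 * X 0) (C L1c * X 1)).trans
        (add_le_add (hlin_l1 0) (hlin_l1 1))
      have h3 := hlin_l1 2
      linarith
    linarith
  -- the basic implicit-function data
  set Q₄ : MvPolynomial (Fin 4) ℝ := aeval ![X 0, X 1, X 2] Q with hQ₄def
  set Ψ₁ : MvPolynomial (Fin 4) ℝ := C (-L2c⁻¹) * delta Q₄ 0 with hΨ₁def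
  set Q₀ : MvPolynomial (Fin 3) ℝ := aeval ![X 0, X 1, 0] Q with hQ₀def
  set Φ₁ : MvPolynomial (Fin 3) ℝ :=
    C L2c⁻¹ * (X 2 - C L0 * X 0 - C L1c * X 1 - Q₀) with hΦ₁def
  have hQ₄deg : Q₄.totalDegree ≤ k := by
    rw [hQ₄def]
    have := totalDegree_aeval_le (![X 0, X 1, X 2] : Fin 3 → MvPolynomial (Fin 4) ℝ) Q
      (B := 1) (by intro i; fin_cases i <;> simp)
    rw [mul_one] at this
    exact this.trans hQdeg
  have hQ₄l1 : l1 Q₄ ≤ 4*B := by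
    rw [hQ₄def]
    have := l1_aeval_le (![X 0, X 1, X 2] : Fin 3 → MvPolynomial (Fin 4) ℝ) Q le_rfl
      (by intro i; fin_cases i <;> simpa using l1_X_le _)
    simpa using this.trans (by simpa using hQl1)
  have hQ₄2 : MinDeg Q₄ 2 := by
    rw [hQ₄def]
    exact hQ2.aeval _ (by intro i; fin_cases i <;> simpa using MinDeg_X _)
  have hQ₀l1 : l1 Q₀ ≤ 4*B := by
    rw [hQ₀def]
    have := l1_aeval_le (![X 0, X 1, 0] : Fin 3 → MvPolynomial (Fin 3) ℝ) Q le_rfl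
      (by intro i; fin_cases i <;> first | simpa using l1_X_le _ | simp [l1])
    simpa using this.trans (by simpa using hQl1)
  have hQ₀deg : Q₀.totalDegree ≤ k := by
    rw [hQ₀def]
    have := totalDegree_aeval_le (![X 0, X 1, 0] : Fin 3 → MvPolynomial (Fin 3) ℝ) Q
      (B := 1) (by intro i; fin_cases i <;> simp)
    rw [mul_one] at this
    exact this.trans hQdeg
  have hQ₀0 : constantCoeff Q₀ = 0 := by
    rw [hQ₀def, constantCoeff_aeval]
    have hfun : (fun i => constantCoeff ((![X 0, X 1, 0] :
        Fin 3 → MvPolynomial (Fin 3) ℝ) i)) = (fun _ => 0) := by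
      funext i; fin_cases i <;> simp
    rw [hfun, eval_zero']
    rw [MvPolynomial.constantCoeff_eq]
    exact hQ0
  -- bounds for Φ₁, Ψ₁
  have hΦ₁l1 : l1 Φ₁ ≤ A := by
    rw [hΦ₁def]
    refine (l1_C_mul_le _ _).trans ?_
    have habs : |L2c⁻¹| ≤ c⁻¹ := by rw [abs_inv]; exact habsinv
    have hin : l1 (X 2 - C L0 * X 0 - C L1c * X 1 - Q₀) ≤ 1 + 6*B := by
      refine (l1_sub_le _ _).trans ?_
      have h1 : l1 ((X 2 : MvPolynomial (Fin 3) ℝ) - C L0 * X 0 - C L1c * X 1) ≤ 1 + 2*B := by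
        refine (l1_sub_le _ _).trans ?_
        have h2 : l1 ((X 2 : MvPolynomial (Fin 3) ℝ) - C L0 * X 0) ≤ 1 + B := by
          refine (l1_sub_le _ _).trans ?_
          have := hlin_l1 0
          have hX := l1_X_le (2 : Fin 3)
          rw [← hL0] at this
          linarith
        have := hlin_l1 1
        rw [← hL1c] at this
        linarith
      have := hQ₀l1
      linarith
    calc |L2c⁻¹| * l1 (X 2 - C L0 * X 0 - C L1c * X 1 - Q₀) ≤ c⁻¹ * (1 + 6*B) := by
          refine mul_le_mul habs hin (l1_nonneg _) (le_of_lt hcinv)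
      _ ≤ A := by
          have h2 : (0:ℝ) ≤ c⁻¹ * (4*B*(K:ℝ)) := by positivity
          rw [hA]; linarith
  have hΨ₁l1 : l1 Ψ₁ ≤ A := by
    rw [hΨ₁def]
    refine (l1_C_mul_le _ _).trans ?_
    have habs : |(-L2c⁻¹)| ≤ c⁻¹ := by rw [abs_neg, abs_inv]; exact habsinv
    have hdel : l1 (delta Q₄ 0) ≤ 4*B*K := by
      have := l1_delta_le (s := Q₄) (r := 0) (B := 1) le_rfl (by simp [l1])
      simp only [one_pow, mul_one] at this
      refine this.trans ?_
      have hcast : (Q₄.totalDegree : ℝ) ≤ (K : ℝ) := by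
        exact_mod_cast hQ₄deg.trans (by omega)
      calc l1 Q₄ * (Q₄.totalDegree : ℝ) ≤ (4*B) * K := by
            refine mul_le_mul hQ₄l1 hcast (Nat.cast_nonneg _) (by linarith)
        _ = 4*B*K := by ring
    calc |(-L2c⁻¹)| * l1 (delta Q₄ 0) ≤ c⁻¹ * (4*B*K) := by
          refine mul_le_mul habs hdel (l1_nonneg _) (le_of_lt hcinv)
      _ ≤ A := by
          have h2 : (0:ℝ) ≤ c⁻¹ * (1 + 6*B) := by positivity
          rw [hA]; linarith
  have hΦ₁deg : Φ₁.totalDegree ≤ K := by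
    rw [hΦ₁def]
    refine (MvPolynomial.totalDegree_mul _ _).trans ?_
    rw [MvPolynomial.totalDegree_C, zero_add]
    rw [sub_eq_add_neg, sub_eq_add_neg, sub_eq_add_neg]
    refine (MvPolynomial.totalDegree_add _ _).trans (max_le ?_ ?_)
    · refine (MvPolynomial.totalDegree_add _ _).trans (max_le ?_ ?_)
      · refine (MvPolynomial.totalDegree_add _ _).trans (max_le ?_ ?_)
        · simp [MvPolynomial.totalDegree_X]; omega
        · rw [MvPolynomial.totalDegree_neg]; exact (hlin_deg _ _).trans (by omega)
      · rw [MvPolynomial.totalDegree_neg]; exact (hlin_deg _ _).trans (by omega)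
    · rw [MvPolynomial.totalDegree_neg]; exact hQ₀deg.trans (by omega)
  have hΨ₁deg : Ψ₁.totalDegree ≤ K := by
    rw [hΨ₁def]
    refine (MvPolynomial.totalDegree_mul _ _).trans ?_
    rw [MvPolynomial.totalDegree_C, zero_add]
    refine (totalDegree_delta_le _ _).trans ?_
    have : (0 : MvPolynomial (Fin 4) ℝ).totalDegree = 0 := MvPolynomial.totalDegree_zero
    rw [this]
    have := hQ₄deg
    omega
  have hΨ₁min : MinDeg Ψ₁ 1 := by
    rw [hΨ₁def]
    exact MinDeg_C_mul _ (MinDeg_delta hQ₄2 (MinDeg_zero_poly 1))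
  have hΦ₁0 : constantCoeff Φ₁ = 0 := by
    rw [hΦ₁def, map_mul]
    have : constantCoeff (X 2 - C L0 * X 0 - C L1c * X 1 - Q₀) = 0 := by
      rw [map_sub, map_sub, map_sub, hQ₀0]
      simp
    rw [this, mul_zero]
  -- the base identity
  have hsubQ₄ : aeval ![X 0, X 1, X 2, G] Q₄ = Q := by
    rw [hQ₄def, aeval_aeval]
    have hfun : (fun i => (aeval (R := ℝ) ![X 0, X 1, (X 2 : MvPolynomial (Fin 3) ℝ), G])
        ((![X 0, X 1, X 2] : Fin 3 → MvPolynomial (Fin 4) ℝ) i)) = X := by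
      funext i; fin_cases i <;> simp
    rw [hfun, aeval_X_left_apply]
  have hrep0 : aeval ![X 0, X 1, X 2, G] (rep 0 Q₄) = Q₀ := by
    rw [rep, aeval_aeval]
    have hfun : (fun i => (aeval (R := ℝ) ![X 0, X 1, (X 2 : MvPolynomial (Fin 3) ℝ), G])
        ((![X 0, X 1, 0, X 3] : Fin 4 → MvPolynomial (Fin 4) ℝ) i)) = ![X 0, X 1, 0, G] := by
      funext i; fin_cases i <;> simp
    rw [hfun, hQ₄def, aeval_aeval]
    have hfun2 : (fun i => (aeval (R := ℝ) ![X 0, X 1, (0 : MvPolynomial (Fin 3) ℝ), G])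
        ((![X 0, X 1, X 2] : Fin 3 → MvPolynomial (Fin 4) ℝ) i)) = ![X 0, X 1, 0] := by
      funext i; fin_cases i <;> simp
    rw [hfun2, hQ₀def]
  have hdelta := delta_spec Q₄ 0
  have h5 : (X 2 : MvPolynomial (Fin 3) ℝ) * aeval ![X 0, X 1, X 2, G] (delta Q₄ 0)
      = Q - Q₀ := by
    have := congrArg (aeval (R := ℝ) ![X 0, X 1, (X 2 : MvPolynomial (Fin 3) ℝ), G]) hdelta
    rw [map_mul, map_sub, map_sub, hsubQ₄, hrep0, map_zero, sub_zero] at this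
    have hX2 : aeval (R := ℝ) ![X 0, X 1, (X 2 : MvPolynomial (Fin 3) ℝ), G]
        (X 2 : MvPolynomial (Fin 4) ℝ) = (X 2 : MvPolynomial (Fin 3) ℝ) := by
      rw [aeval_X]; rfl
    rw [hX2] at this
    exact this
  have hQ₀sub : aeval ![X 0, X 1, G] Q₀ = Q₀ := by
    rw [hQ₀def, aeval_aeval]
    have hfun : (fun i => (aeval (R := ℝ) ![X 0, X 1, G])
        ((![X 0, X 1, 0] : Fin 3 → MvPolynomial (Fin 3) ℝ) i)) = ![X 0, X 1, 0] := by
      funext i; fin_cases i <;> simp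
    rw [hfun]
  have base : (X 2 : MvPolynomial (Fin 3) ℝ)
      = aeval ![X 0, X 1, G] Φ₁ + X 2 * aeval ![X 0, X 1, X 2, G] Ψ₁ := by
    have hsubΦ₁ : aeval ![X 0, X 1, G] Φ₁
        = C L2c⁻¹ * (G - C L0 * X 0 - C L1c * X 1 - Q₀) := by
      rw [hΦ₁def, map_mul, map_sub, map_sub, map_sub, hQ₀sub]
      simp only [aeval_C, aeval_X, map_mul]
      have h2G : (![X 0, X 1, G] : Fin 3 → MvPolynomial (Fin 3) ℝ) 2 = G := rfl
      norm_num [algebraMap_eq, h2G]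
    have hsubΨ₁ : (X 2 : MvPolynomial (Fin 3) ℝ) * aeval ![X 0, X 1, X 2, G] Ψ₁
        = C (-L2c⁻¹) * (Q - Q₀) := by
      rw [hΨ₁def, map_mul, aeval_C, ← h5]
      have : (algebraMap ℝ (MvPolynomial (Fin 3) ℝ)) (-L2c⁻¹) = C (-L2c⁻¹) := rfl
      rw [this]; ring
    rw [hsubΦ₁, hsubΨ₁]
    have hCC : (C L2c⁻¹ : MvPolynomial (Fin 3) ℝ) * C L2c = 1 := by
      rw [← C_mul, inv_mul_cancel₀ hL2ne, C_1]
    have hQeq : Q = G - (C L0 * X 0 + C L1c * X 1 + C L2c * X 2) := hQdef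
    rw [map_neg]
    linear_combination (-(X 2 : MvPolynomial (Fin 3) ℝ)) * hCC + C L2c⁻¹ * hQeq
  -- now assemble
  refine ⟨xr Φ₁ Ψ₁ mm, Psir Φ₁ Ψ₁ mm, ?_, ?_, ?_, ?_, ?_, ?_, ?_⟩
  · rw [← MvPolynomial.constantCoeff_eq]
    exact xr_constantCoeff hΦ₁0 mm
  · refine MinDeg_prod ?_
    intro j hj
    refine MinDeg_delta (dn := 1) ?_ ?_
    · have := (MinDeg_X (2 : Fin 4)).mul hΨ₁min
      simpa using this
    · exact lift3_MinDeg (MinDeg_one_of_constantCoeff (xr_constantCoeff hΦ₁0 j))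
  · exact (xr_deg hK1 hΦ₁deg hΨ₁deg mm).trans (Nat.le_add_left _ _)
  · refine (deg_prod_le (bd := K * (2 + Dx K mm)) ?_).trans ?_
    · intro j hj
      refine (totalDegree_delta_le _ _).trans ?_
      have hP : ((X 2 : MvPolynomial (Fin 4) ℝ) * Ψ₁).totalDegree ≤ K := by
        refine (MvPolynomial.totalDegree_mul _ _).trans ?_
        have hX := MvPolynomial.totalDegree_X (R := ℝ) (2 : Fin 4)
        have h2k : Ψ₁.totalDegree ≤ 2*k + 1 := by
          refine le_trans ?_ (by omega : 2*k ≤ 2*k+1)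
          rw [hΨ₁def]
          refine (MvPolynomial.totalDegree_mul _ _).trans ?_
          rw [MvPolynomial.totalDegree_C, zero_add]
          refine (totalDegree_delta_le _ _).trans ?_
          rw [MvPolynomial.totalDegree_zero]
          have := hQ₄deg
          omega
        omega
      have ht : (lift3 (xr Φ₁ Ψ₁ j)).totalDegree ≤ Dx K mm := by
        refine (lift3_deg_le _).trans ?_
        exact (xr_deg hK1 hΦ₁deg hΨ₁deg j).trans (Dx_mono K (by omega : j ≤ mm))
      exact Nat.mul_le_mul hP (Nat.add_le_add_left ht 2)
    · exact Nat.le_add_right _ _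
  · intro d
    refine (abs_coeff_le_l1 _ d).trans ?_
    refine ((xr_l1 hA1 hΦ₁l1 hΨ₁l1 hΨ₁deg mm).trans ?_)
    have : (0:ℝ) ≤ Aq ^ mm := by positivity
    rw [hBB]; linarith
  · intro d
    refine (abs_coeff_le_l1 _ d).trans ?_
    have hq : ∀ j, j < mm → l1 (qr Φ₁ Ψ₁ j) ≤ Aq := by
      intro j hj
      rw [qr]
      have ht : l1 (lift3 (xr Φ₁ Ψ₁ j)) ≤ BB := by
        refine (lift3_l1_le _).trans ?_
        refine (xr_l1 hA1 hΦ₁l1 hΨ₁l1 hΨ₁deg j).trans ?_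
        exact Cx_mono hA1 K (by omega : j ≤ mm)
      refine (l1_delta_le hBB1 ht).trans ?_
      have hPl1 : l1 ((X 2 : MvPolynomial (Fin 4) ℝ) * Ψ₁) ≤ A := by
        refine (l1_mul_le _ _).trans ?_
        calc l1 (X 2 : MvPolynomial (Fin 4) ℝ) * l1 Ψ₁ ≤ 1 * A :=
            mul_le_mul (l1_X_le _) hΨ₁l1 (l1_nonneg _) zero_le_one
          _ = A := one_mul A
      have hPdeg : ((X 2 : MvPolynomial (Fin 4) ℝ) * Ψ₁).totalDegree ≤ K := by
        refine (MvPolynomial.totalDegree_mul _ _).trans ?_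
        have hX := MvPolynomial.totalDegree_X (R := ℝ) (2 : Fin 4)
        have h2k : Ψ₁.totalDegree ≤ 2*k + 1 := by
          refine le_trans ?_ (by omega : 2*k ≤ 2*k+1)
          rw [hΨ₁def]
          refine (MvPolynomial.totalDegree_mul _ _).trans ?_
          rw [MvPolynomial.totalDegree_C, zero_add]
          refine (totalDegree_delta_le _ _).trans ?_
          rw [MvPolynomial.totalDegree_zero]
          have := hQ₄deg
          omega
        omega
      have hdc : (((X 2 : MvPolynomial (Fin 4) ℝ) * Ψ₁).totalDegree : ℝ) ≤ (K:ℝ) :=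
        Nat.cast_le.mpr hPdeg
      have hpowle : BB ^ ((X 2 : MvPolynomial (Fin 4) ℝ) * Ψ₁).totalDegree ≤ BB ^ K :=
        pow_le_pow_right₀ hBB1 hPdeg
      rw [hAq]
      have h0 : (0:ℝ) ≤ BB ^ ((X 2 : MvPolynomial (Fin 4) ℝ) * Ψ₁).totalDegree := by positivity
      have h1 : (0:ℝ) ≤ (((X 2 : MvPolynomial (Fin 4) ℝ) * Ψ₁).totalDegree : ℝ) :=
        Nat.cast_nonneg _
      have hKr : (0:ℝ) ≤ (K:ℝ) := Nat.cast_nonneg _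
      have hl1P : (0:ℝ) ≤ l1 ((X 2 : MvPolynomial (Fin 4) ℝ) * Ψ₁) := l1_nonneg _
      have hA0 : (0:ℝ) ≤ A := by linarith
      refine mul_le_mul hPl1 ?_ (by positivity) hA0
      refine mul_le_mul hdc hpowle h0 hKr
    have := l1_prod_le hAq1 hq (mm := mm)
    rw [Psir]
    refine this.trans ?_
    rw [hBB]
    have := Cx_ge_one hA1 K mm
    linarith
  · have hfin := main_identity G Φ₁ Ψ₁ base mm
    rw [map_sub, substG4_lift3] at hfin
    have hX2 : aeval (R := ℝ) ![X 0, X 1, (X 2 : MvPolynomial (Fin 3) ℝ), G]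
        (X 2 : MvPolynomial (Fin 4) ℝ) = (X 2 : MvPolynomial (Fin 3) ℝ) := by
      rw [aeval_X]; rfl
    rw [hX2] at hfin
    linear_combination hfin

lemma abs_eval_le {n : ℕ} (x : Fin n → ℝ) (hx : ∀ i, |x i| ≤ 1) (p : MvPolynomial (Fin n) ℝ) :
    |eval x p| ≤ l1 p := by
  rw [MvPolynomial.eval_eq']
  refine (Finset.abs_sum_le_sum_abs _ _).trans ?_
  rw [l1]
  refine Finset.sum_le_sum fun d hd => ?_
  rw [abs_mul]
  have hprod : |∏ i, x i ^ d i| ≤ 1 := by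
    rw [Finset.abs_prod]
    refine Finset.prod_le_one (fun i _ => abs_nonneg _) (fun i _ => ?_)
    rw [abs_pow]
    exact pow_le_one₀ (abs_nonneg _) (hx i)
  calc |p.coeff d| * |∏ i, x i ^ d i| ≤ |p.coeff d| * 1 :=
      mul_le_mul_of_nonneg_left hprod (abs_nonneg _)
    _ = |p.coeff d| := mul_one _

end Stmt7

open Stmt7

/-- Marmon, Lemma 2.2 (Heath-Brown's Lemma 2): let `F ∈ ℤ[x₁,…,x₄]` be a
nonsingular form of degree `k ≥ 3` and `M₀ ≥ 1` be the constant of the covering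
lemma. Fix `c > 0` and `m ≥ 1`. Then there are `D = D(F,c,m)` and
`H = H(F,c,m)` such that for every `M ≥ 1` and every good partition cube
`S = ∏ⱼ [aⱼ, aⱼ + (M₀M)⁻¹] ⊆ [-1,1]³` (with corners `aⱼ = -1 + mⱼ/(M₀M)`,
containing a point `t` with `|F(t,1)| ≤ (M₀M)⁻¹`, and with
`|∂F/∂x₃(a,1)| ≥ c`) there are polynomials `Φ(u₁,u₂,w)` with no constant term
and `Ψ(u₁,u₂,u₃,w)` with every term of degree at least `m`, of degree at most
`D` and coefficients of modulus at most `H`, such that throughout `S`, setting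
`uⱼ = tⱼ - aⱼ` and `w = F(t,1) - F(a,1)`, one has
`u₃ = Φ(u₁,u₂,w) + u₃·Ψ(u₁,u₂,u₃,w)`. -/
theorem stmt7 (k : ℕ) (hk : 3 ≤ k) (F : MvPolynomial (Fin 4) ℤ)
    (hhom : F.IsHomogeneous k)
    (hns : ∀ z : Fin 4 → ℂ,
      (∀ i : Fin 4, eval z (map (Int.castRingHom ℂ) (pderiv i F)) = 0) → z = 0)
    (M₀ : ℕ) (hM₀ : 0 < M₀) (c : ℝ) (hc : 0 < c) (m : ℕ) (hm : 0 < m) :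
    ∃ (D : ℕ) (H : ℝ), ∀ (M : ℕ), 0 < M → ∀ a : Fin 3 → ℝ,
      (∃ mi : Fin 3 → ℕ, (∀ j, mi j < 2 * M₀ * M) ∧
        ∀ j, a j = -1 + (mi j : ℝ) / ((M₀ : ℝ) * M)) →
      (∃ t : Fin 3 → ℝ,
        (∀ j, a j ≤ t j ∧ t j ≤ a j + 1 / ((M₀ : ℝ) * M)) ∧
        |eval (Fin.snoc t 1) (map (Int.castRingHom ℝ) F)| ≤ 1 / ((M₀ : ℝ) * M)) →
      c ≤ |eval (Fin.snoc a 1) (map (Int.castRingHom ℝ) (pderiv 2 F))| →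
      ∃ (Φ : MvPolynomial (Fin 3) ℝ) (Ψ : MvPolynomial (Fin 4) ℝ),
        Φ.coeff 0 = 0 ∧
        (∀ d ∈ Ψ.support, m ≤ d.sum fun _ e => e) ∧
        Φ.totalDegree ≤ D ∧ Ψ.totalDegree ≤ D ∧
        (∀ d, |Φ.coeff d| ≤ H) ∧ (∀ d, |Ψ.coeff d| ≤ H) ∧
        ∀ t : Fin 3 → ℝ, (∀ j, a j ≤ t j ∧ t j ≤ a j + 1 / ((M₀ : ℝ) * M)) →
          t 2 - a 2 =
            eval ![t 0 - a 0, t 1 - a 1,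
                eval (Fin.snoc t 1) (map (Int.castRingHom ℝ) F) -
                eval (Fin.snoc a 1) (map (Int.castRingHom ℝ) F)] Φ
            + (t 2 - a 2) *
              eval ![t 0 - a 0, t 1 - a 1, t 2 - a 2,
                eval (Fin.snoc t 1) (map (Int.castRingHom ℝ) F) -
                eval (Fin.snoc a 1) (map (Int.castRingHom ℝ) F)] Ψ := by
  classical
  set FR : MvPolynomial (Fin 4) ℝ := map (Int.castRingHom ℝ) F with hFR
  set P₃ : MvPolynomial (Fin 3) ℝ := aeval (Fin.snoc X (1 : MvPolynomial (Fin 3) ℝ)) FR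
    with hP₃
  have hFRdeg : FR.totalDegree ≤ k := by
    rw [hFR]
    refine le_trans (Finset.sup_mono (MvPolynomial.support_map_subset _ _)) ?_
    exact hhom.totalDegree_le
  have hsnocdeg : ∀ i : Fin 4,
      ((Fin.snoc X (1 : MvPolynomial (Fin 3) ℝ) : Fin 4 → MvPolynomial (Fin 3) ℝ) i).totalDegree
        ≤ 1 := by
    intro i
    induction i using Fin.lastCases with
    | last => simp only [Fin.snoc_last]; simp
    | cast j => simp [MvPolynomial.totalDegree_X]
  have hP₃deg : P₃.totalDegree ≤ k := by
    rw [hP₃]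
    have := totalDegree_aeval_le (Fin.snoc X (1 : MvPolynomial (Fin 3) ℝ)) FR
      (B := 1) hsnocdeg
    rw [mul_one] at this
    exact this.trans hFRdeg
  have hP₃eval : ∀ s : Fin 3 → ℝ, eval s P₃ = eval (Fin.snoc s 1) FR := by
    intro s
    rw [hP₃, eval_aeval]
    have hfun : (fun i => eval s ((Fin.snoc X (1 : MvPolynomial (Fin 3) ℝ) :
        Fin 4 → MvPolynomial (Fin 3) ℝ) i)) = Fin.snoc s 1 := by
      funext i
      induction i using Fin.lastCases with
      | last => simp only [Fin.snoc_last]; simp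
      | cast j => simp
    rw [hfun]
  set B : ℝ := l1 P₃ * 2 ^ k + l1 P₃ + 1 with hBdef
  have hB1 : 1 ≤ B := by
    have h1 : (0:ℝ) ≤ l1 P₃ := l1_nonneg _
    have h2 : (0:ℝ) ≤ l1 P₃ * 2 ^ k := by positivity
    rw [hBdef]; linarith
  have hk1 : 1 ≤ k := by omega
  obtain ⟨D, H, hDH⟩ := key k m hk1 c B hc hB1
  refine ⟨D, H, ?_⟩
  rintro M hM a ⟨mi, hmi, haeq⟩ - hpd
  have hMM : (0:ℝ) < (M₀:ℝ) * M := by positivity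
  have haabs : ∀ j, |a j| ≤ 1 := by
    intro j
    rw [haeq j, abs_le]
    have h0 : (0:ℝ) ≤ (mi j : ℝ) / ((M₀:ℝ)*M) := by positivity
    have h2 : (mi j : ℝ) ≤ 2 * ((M₀:ℝ)*M) := by
      have := hmi j
      have : (mi j : ℝ) ≤ (2 * M₀ * M : ℕ) := by exact_mod_cast this.le
      push_cast at this
      linarith
    constructor
    · linarith
    · have h3 : (mi j : ℝ) / ((M₀:ℝ)*M) ≤ 2 := by
        rw [div_le_iff₀ hMM]; linarith
      linarith
  set G : MvPolynomial (Fin 3) ℝ :=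
    aeval (fun i => C (a i) + X i) P₃ - C (eval a P₃) with hGdef
  have hshift0 : (fun i => constantCoeff ((fun i => C (a i) + X i) i)) = a := by
    funext i; simp
  have hG0 : constantCoeff G = 0 := by
    rw [hGdef, map_sub, constantCoeff_aeval, hshift0, constantCoeff_C, sub_self]
  have hGd : G.totalDegree ≤ k := by
    rw [hGdef, sub_eq_add_neg]
    refine (MvPolynomial.totalDegree_add _ _).trans (max_le ?_ ?_)
    · have := totalDegree_aeval_le (fun i => C (a i) + X i) P₃ (B := 1) ?_
      · rw [mul_one] at this; exact this.trans hP₃deg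
      · intro i
        refine (MvPolynomial.totalDegree_add _ _).trans ?_
        simp [MvPolynomial.totalDegree_C, MvPolynomial.totalDegree_X]
    · rw [MvPolynomial.totalDegree_neg, MvPolynomial.totalDegree_C]
      omega
  have hGl : l1 G ≤ B := by
    rw [hGdef]
    refine (l1_sub_le _ _).trans ?_
    have h1 : l1 (aeval (fun i => C (a i) + X i) P₃) ≤ l1 P₃ * 2 ^ k := by
      have hcomp : ∀ i, l1 ((C (a i) + X i : MvPolynomial (Fin 3) ℝ)) ≤ 2 := by
        intro i
        refine (l1_add_le _ _).trans ?_
        have hC : l1 (C (a i) : MvPolynomial (Fin 3) ℝ) ≤ |a i| := by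
          simpa using l1_monomial_le (0 : Fin 3 →₀ ℕ) (a i)
        have := haabs i
        have := l1_X_le (i : Fin 3)
        linarith
      refine (l1_aeval_le _ _ one_le_two hcomp).trans ?_
      refine mul_le_mul_of_nonneg_left ?_ (l1_nonneg _)
      exact pow_le_pow_right₀ one_le_two hP₃deg
    have h2 : l1 (C (eval a P₃) : MvPolynomial (Fin 3) ℝ) ≤ l1 P₃ := by
      refine le_trans ?_ (abs_eval_le a haabs P₃)
      simpa using l1_monomial_le (0 : Fin 3 →₀ ℕ) (eval a P₃)
    rw [hBdef]
    linarith
  have hGc : c ≤ |G.coeff (Finsupp.single 2 1)| := by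
    have hcoeff : G.coeff (Finsupp.single 2 1)
        = eval (Fin.snoc a 1) (map (Int.castRingHom ℝ) (pderiv 2 F)) := by
      rw [hGdef, coeff_sub, MvPolynomial.coeff_C,
        if_neg (show ¬(0 : Fin 3 →₀ ℕ) = Finsupp.single 2 1 from fun h => by
          have := congrFun (congrArg (fun f : Fin 3 →₀ ℕ => ⇑f) h) 2
          simp at this),
        sub_zero, coeff_single_aeval_shift]
      have hchain : pderiv 2 P₃ = aeval (Fin.snoc X (1 : MvPolynomial (Fin 3) ℝ))
          (map (Int.castRingHom ℝ) (pderiv 2 F)) := by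
        rw [hP₃]
        have h1 := pderiv_aeval_snoc FR (2 : Fin 3)
        have h2 : Fin.castSucc (2 : Fin 3) = (2 : Fin 4) := by decide
        rw [h2] at h1
        rw [h1, hFR, pderiv_map]
      rw [hchain, eval_aeval]
      have hfun : (fun i => eval a ((Fin.snoc X (1 : MvPolynomial (Fin 3) ℝ) :
          Fin 4 → MvPolynomial (Fin 3) ℝ) i)) = Fin.snoc a 1 := by
        funext i
        induction i using Fin.lastCases with
        | last => simp only [Fin.snoc_last]; simp
        | cast j => simp
      rw [hfun]
    rw [hcoeff]
    exact hpd
  obtain ⟨Φ, Ψ, hΦ0, hΨmin, hΦd, hΨd, hΦc, hΨc, hid⟩ := hDH G hG0 hGd hGl hGc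
  refine ⟨Φ, Ψ, hΦ0, hΨmin, hΦd, hΨd, hΦc, hΨc, ?_⟩
  intro t ht
  set u : Fin 3 → ℝ := fun j => t j - a j with hu
  have hGeval : eval u G = eval (Fin.snoc t 1) FR - eval (Fin.snoc a 1) FR := by
    rw [hGdef, map_sub, eval_aeval, eval_C]
    have hfun : (fun i => eval u ((fun i => C (a i) + X i) i)) = t := by
      funext i; simp [hu]
    rw [hfun, hP₃eval, hP₃eval]
  have := congrArg (eval u) hid
  rw [map_add, map_mul, eval_X, eval_aeval, eval_aeval] at this
  have hfunΦ : (fun i => eval u ((![X 0, X 1, G] : Fin 3 → MvPolynomial (Fin 3) ℝ) i))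
      = ![t 0 - a 0, t 1 - a 1,
          eval (Fin.snoc t 1) FR - eval (Fin.snoc a 1) FR] := by
    funext i
    fin_cases i <;> simp [hu, hGeval] <;> simpa [hu] using hGeval
  have hfunΨ : (fun i => eval u ((![X 0, X 1, X 2, G] : Fin 4 → MvPolynomial (Fin 3) ℝ) i))
      = ![t 0 - a 0, t 1 - a 1, t 2 - a 2,
          eval (Fin.snoc t 1) FR - eval (Fin.snoc a 1) FR] := by
    funext i
    fin_cases i <;> simp [hu, hGeval] <;> simpa [hu] using hGeval
  rw [hfunΦ, hfunΨ] at this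
  have hu2 : u 2 = t 2 - a 2 := rfl
  rw [hu2] at this
  exact this
end

section
/- Let n, D, H be positive integers and let X1, …, Xn be real numbers with 0 ≤ Xi ≤ 1. For a monomial m = x1^{α1}···xn^{αn} define its size ‖m‖ = X1^{α1}···Xn^{αn}, and let Π denote the supremum, over all sets of H pairwise distinct monomials in x1, …, xn, of the product of their sizes (i.e., the product of the H largest monomial sizes). Then there exists a constant C, depending only on n, H and D, such that for all polynomials f1, …, fH ∈ ℂ[x1,…,xn] of degree at most D and all points x^(1), …, x^(H) ∈ ℂⁿ with |x_i^(j)| ≤ Xi for all i and j, the determinant of the H × H matrix with entries f_i(x^(j)) has absolute value at most C · (max_j ‖f_j‖)^H · Π, where ‖f‖ denotes the maximum modulus of the coefficients of f. -/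
/-- Heath-Brown's generalized Vandermonde determinant bound
(Marmon, Lemma 3.3 / Heath-Brown, Lemma 3): given `n, D, H ≥ 1` there is a
constant `C = C(n,H,D)` such that for all `0 ≤ Xᵢ ≤ 1`, all polynomials
`f₁,…,f_H ∈ ℂ[x₁,…,xₙ]` of degree at most `D` whose coefficients all have
modulus at most `hgt`, and all points `x⁽¹⁾,…,x⁽ᴴ⁾ ∈ ℂⁿ` with `|xᵢ⁽ʲ⁾| ≤ Xᵢ`,
the determinant `det(fᵢ(x⁽ʲ⁾))` has modulus at most `C · hgt^H · Π`, where `Π`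
is the supremum over all `H`-element sets of monomials of the product of their
sizes `‖x^α‖ = ∏ Xᵢ^{αᵢ}` (i.e. the product of the `H` largest monomial
sizes). -/
theorem stmt8 (n D H : ℕ) (hn : 0 < n) (hD : 0 < D) (hH : 0 < H) :
    ∃ C : ℝ, ∀ X : Fin n → ℝ, (∀ i, 0 ≤ X i ∧ X i ≤ 1) →
      ∀ (f : Fin H → MvPolynomial (Fin n) ℂ) (x : Fin H → Fin n → ℂ) (hgt : ℝ),
      (∀ j, (f j).totalDegree ≤ D) →
      (∀ j d, ‖(f j).coeff d‖ ≤ hgt) →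
      (∀ j i, ‖x j i‖ ≤ X i) →
      ‖Matrix.det (Matrix.of fun i j : Fin H =>
          MvPolynomial.eval (x j) (f i))‖
        ≤ C * hgt ^ H *
          sSup {p : ℝ | ∃ s : Finset (Fin n →₀ ℕ), s.card = H ∧
            p = ∏ d ∈ s, ∏ i, X i ^ d i} := by
  classical
  set N : ℕ := (D + 1) ^ n with hN
  refine ⟨(N : ℝ) ^ H * (Nat.factorial H : ℝ), ?_⟩
  intro X hX f x hgt hdeg hcoef hx
  have hX0 : ∀ i, (0:ℝ) ≤ X i := fun i => (hX i).1
  have hX1 : ∀ i, X i ≤ 1 := fun i => (hX i).2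
  have hhgt : (0:ℝ) ≤ hgt :=
    le_trans (norm_nonneg _) (hcoef ⟨0, hH⟩ 0)
  set S : Set ℝ := {p : ℝ | ∃ s : Finset (Fin n →₀ ℕ), s.card = H ∧
      p = ∏ d ∈ s, ∏ i, X i ^ d i} with hSdef
  have hmem_nonneg : ∀ p ∈ S, 0 ≤ p := by
    rintro p ⟨s, -, rfl⟩
    exact Finset.prod_nonneg fun d _ =>
      Finset.prod_nonneg fun i _ => pow_nonneg (hX0 i) _
  have hbdd : BddAbove S := by
    refine ⟨1, ?_⟩
    rintro p ⟨s, -, rfl⟩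
    refine Finset.prod_le_one
      (fun d _ => Finset.prod_nonneg fun i _ => pow_nonneg (hX0 i) _)
      (fun d _ => Finset.prod_le_one (fun i _ => pow_nonneg (hX0 i) _)
        (fun i _ => pow_le_one₀ (hX0 i) (hX1 i)))
  have hPi0 : 0 ≤ sSup S := by
    set s₀ : Finset (Fin n →₀ ℕ) :=
      (Finset.range H).image (fun m => Finsupp.single (⟨0, hn⟩ : Fin n) m) with hs₀
    have hcard : s₀.card = H := by
      rw [hs₀, Finset.card_image_of_injective _ (Finsupp.single_injective _),
        Finset.card_range]
    have hmem : (∏ d ∈ s₀, ∏ i, X i ^ d i) ∈ S := ⟨s₀, hcard, rfl⟩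
    exact le_trans (hmem_nonneg _ hmem) (le_csSup hbdd hmem)
  -- bound on support size
  have hdk : ∀ j d, d ∈ (f j).support → ∀ k, d k ≤ D := by
    intro j d hd k
    have h1 : d k ≤ d.sum fun _ e => e := by
      rw [Finsupp.sum]
      by_cases hk : k ∈ d.support
      · exact Finset.single_le_sum (fun a _ => Nat.zero_le _) hk
      · simp [Finsupp.notMem_support_iff.mp hk]
    exact h1.trans ((MvPolynomial.le_totalDegree hd).trans (hdeg j))
  have hsupp : ∀ j, (f j).support.card ≤ N := by
    intro j
    have : (f j).support.card ≤ (Finset.univ : Finset (Fin n → Fin (D+1))).card := by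
      refine Finset.card_le_card_of_injOn
        (fun d k => (⟨min (d k) D, by omega⟩ : Fin (D+1)))
        (fun d _ => Finset.mem_univ _) ?_
      intro d hd d' hd' h
      ext k
      have := congrFun h k
      have h1 : min (d k) D = min (d' k) D := by
        simpa using this
      have h2 := hdk j d hd k
      have h3 := hdk j d' hd' k
      omega
    simpa [hN, Fintype.card_fun] using this
  -- expand the determinant by multilinearity
  have hdet : (Matrix.of fun i j : Fin H => MvPolynomial.eval (x j) (f i)).det
      = ∑ r ∈ Fintype.piFinset (fun i => (f i).support),
          (∏ i, (f i).coeff (r i)) •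
            (Matrix.of fun i j : Fin H => ∏ k, x j k ^ (r i) k).det := by
    have h1 : (Matrix.of fun i j : Fin H => MvPolynomial.eval (x j) (f i))
        = fun i => ∑ d ∈ (f i).support,
            ((f i).coeff d) • (fun j => ∏ k, x j k ^ d k) := by
      funext i j
      simp [MvPolynomial.eval_eq', Finset.sum_apply, Matrix.of_apply]
    calc (Matrix.of fun i j : Fin H => MvPolynomial.eval (x j) (f i)).det
        = (Matrix.detRowAlternating (R := ℂ)).toMultilinearMap
            (fun i => ∑ d ∈ (f i).support,
              ((f i).coeff d) • (fun j => ∏ k, x j k ^ d k)) := by rw [← h1]; rfl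
      _ = ∑ r ∈ Fintype.piFinset (fun i => (f i).support),
            (Matrix.detRowAlternating (R := ℂ)).toMultilinearMap
              (fun i => ((f i).coeff (r i)) • (fun j => ∏ k, x j k ^ (r i) k)) :=
          MultilinearMap.map_sum_finset _ _ _
      _ = ∑ r ∈ Fintype.piFinset (fun i => (f i).support),
            (∏ i, (f i).coeff (r i)) •
              (Matrix.of fun i j : Fin H => ∏ k, x j k ^ (r i) k).det := by
          refine Finset.sum_congr rfl fun r _ => ?_
          rw [MultilinearMap.map_smul_univ]
          rfl
  rw [hdet]
  -- per-term bound
  have hterm : ∀ r ∈ Fintype.piFinset (fun i => (f i).support),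
      ‖(∏ i, (f i).coeff (r i)) •
          (Matrix.of fun i j : Fin H => ∏ k, x j k ^ (r i) k).det‖
        ≤ (Nat.factorial H : ℝ) * hgt ^ H * sSup S := by
    intro r _
    have hfact0 : (0:ℝ) ≤ (Nat.factorial H : ℝ) * hgt ^ H * sSup S :=
      mul_nonneg (mul_nonneg (Nat.cast_nonneg _) (pow_nonneg hhgt _)) hPi0
    by_cases hinj : Function.Injective r
    · -- injective case
      set V : Matrix (Fin H) (Fin H) ℂ :=
        Matrix.of fun i j : Fin H => ∏ k, x j k ^ (r i) k with hV
      set P : ℝ := ∏ i, ∏ k, X k ^ (r i) k with hP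
      have hP0 : 0 ≤ P :=
        Finset.prod_nonneg fun i _ =>
          Finset.prod_nonneg fun k _ => pow_nonneg (hX0 k) _
      have hPPi : P ≤ sSup S := by
        refine le_csSup hbdd ?_
        refine ⟨Finset.image r Finset.univ, ?_, ?_⟩
        · rw [Finset.card_image_of_injective _ hinj, Finset.card_univ,
            Fintype.card_fin]
        · rw [Finset.prod_image (fun a _ b _ h => hinj h)]
      have habs_entry : ∀ i j, ‖V i j‖ ≤ ∏ k, X k ^ (r i) k := by
        intro i j
        rw [hV, Matrix.of_apply, norm_prod]
        refine Finset.prod_le_prod (fun k _ => norm_nonneg _) ?_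
        intro k _
        rw [norm_pow]
        exact pow_le_pow_left₀ (norm_nonneg _) (hx j k) _
      have hdetV : ‖V.det‖ ≤ (Nat.factorial H : ℝ) * P := by
        rw [Matrix.det_apply]
        refine le_trans (norm_sum_le _ _) ?_
        have hσ : ∀ σ : Equiv.Perm (Fin H),
            ‖Equiv.Perm.sign σ • ∏ i, V (σ i) i‖ ≤ P := by
          intro σ
          have h1 : ‖Equiv.Perm.sign σ • ∏ i, V (σ i) i‖
              = ‖∏ i, V (σ i) i‖ := by
            rcases Int.units_eq_one_or (Equiv.Perm.sign σ) with h | h <;>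
              simp [h]
          rw [h1, norm_prod]
          have h2 : (∏ i, ‖V (σ i) i‖)
              ≤ ∏ i, ∏ k, X k ^ (r (σ i)) k := by
            refine Finset.prod_le_prod (fun i _ => norm_nonneg _)
              (fun i _ => habs_entry (σ i) i)
          refine h2.trans ?_
          rw [hP]
          exact le_of_eq (Equiv.prod_comp σ (fun i => ∏ k, X k ^ (r i) k))
        refine le_trans (Finset.sum_le_sum fun σ _ => hσ σ) ?_
        rw [Finset.sum_const, Finset.card_univ, Fintype.card_perm,
          nsmul_eq_mul, Fintype.card_fin]
      have hcoeff : ‖∏ i, (f i).coeff (r i)‖ ≤ hgt ^ H := by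
        rw [norm_prod]
        calc (∏ i, ‖(f i).coeff (r i)‖)
            ≤ ∏ _i : Fin H, hgt :=
              Finset.prod_le_prod (fun i _ => norm_nonneg _)
                (fun i _ => hcoef i (r i))
          _ = hgt ^ H := by simp
      rw [smul_eq_mul, norm_mul]
      calc ‖∏ i, (f i).coeff (r i)‖ * ‖V.det‖
          ≤ hgt ^ H * ((Nat.factorial H : ℝ) * P) :=
            mul_le_mul hcoeff hdetV (norm_nonneg _)
              (pow_nonneg hhgt _)
        _ ≤ hgt ^ H * ((Nat.factorial H : ℝ) * sSup S) := by
            have := mul_le_mul_of_nonneg_left hPPi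
              (a := (Nat.factorial H : ℝ)) (Nat.cast_nonneg _)
            exact mul_le_mul_of_nonneg_left this (pow_nonneg hhgt _)
        _ = (Nat.factorial H : ℝ) * hgt ^ H * sSup S := by ring
    · -- non-injective: determinant vanishes
      rw [Function.not_injective_iff] at hinj
      obtain ⟨a, b, hab, hne⟩ := hinj
      have hzero : (Matrix.of fun i j : Fin H => ∏ k, x j k ^ (r i) k).det = 0 := by
        apply Matrix.det_zero_of_row_eq hne
        funext j
        simp [hab]
      rw [hzero, smul_zero, norm_zero]
      exact hfact0
  calc ‖∑ r ∈ Fintype.piFinset (fun i => (f i).support),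
        (∏ i, (f i).coeff (r i)) •
          (Matrix.of fun i j : Fin H => ∏ k, x j k ^ (r i) k).det‖
      ≤ ∑ r ∈ Fintype.piFinset (fun i => (f i).support),
          ‖(∏ i, (f i).coeff (r i)) •
            (Matrix.of fun i j : Fin H => ∏ k, x j k ^ (r i) k).det‖ :=
        norm_sum_le _ _
    _ ≤ ∑ _r ∈ Fintype.piFinset (fun i => (f i).support),
          (Nat.factorial H : ℝ) * hgt ^ H * sSup S :=
        Finset.sum_le_sum hterm
    _ = ((Fintype.piFinset fun i => (f i).support).card : ℝ) *
          ((Nat.factorial H : ℝ) * hgt ^ H * sSup S) := by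
        rw [Finset.sum_const, nsmul_eq_mul]
    _ ≤ ((N : ℝ) ^ H) * ((Nat.factorial H : ℝ) * hgt ^ H * sSup S) := by
        refine mul_le_mul_of_nonneg_right ?_
          (mul_nonneg (mul_nonneg (Nat.cast_nonneg _) (pow_nonneg hhgt _)) hPi0)
        rw [Fintype.card_piFinset]
        calc ((∏ i, (f i).support.card : ℕ) : ℝ)
            ≤ ((∏ _i : Fin H, N : ℕ) : ℝ) := by
              exact_mod_cast Finset.prod_le_prod (fun i _ => Nat.zero_le _)
                (fun i _ => hsupp i) |>.trans_eq rfl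
          _ = (N : ℝ) ^ H := by simp
    _ = (N : ℝ) ^ H * (Nat.factorial H : ℝ) * hgt ^ H * sSup S := by ring
end

section
/- Let α > 0 and ν > 1 be real numbers, and let f̃ denote the sum of n1 + n2 + α·n3 over all triples (n1,n2,n3) of non-negative integers satisfying n1 + n2 + α·n3 ≤ ν − 1. Then f̃ ≥ (ν − 1)⁴/(8α) − (2 + α)·(ν + 1 + α)³/(6α). -/
open Finset

noncomputable def DD (M : ℕ) : Finset (ℕ × ℕ) :=
  (range (M+1)).biUnion (fun k => antidiagonal k)

lemma mem_DD {M : ℕ} {q : ℕ × ℕ} : q ∈ DD M ↔ q.1 + q.2 ≤ M := by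
  simp [DD, Nat.lt_succ_iff, Finset.mem_biUnion, Finset.mem_antidiagonal, eq_comm]

lemma DD_disj (M : ℕ) :
    (↑(range (M+1)) : Set ℕ).PairwiseDisjoint (fun k => (antidiagonal k : Finset (ℕ × ℕ))) := by
  intro i _ j _ hij
  simp only [Finset.disjoint_left]
  intro q hq hq'
  rw [Finset.HasAntidiagonal.mem_antidiagonal] at hq hq'
  exact hij (hq ▸ hq')

lemma aux3 (M : ℕ) : 3 * ∑ k ∈ range (M+1), (k + 1) * k = M * (M+1) * (M+2) := by
  induction M with
  | zero => simp
  | succ n ih => rw [Finset.sum_range_succ, Nat.mul_add, ih]; ring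

lemma aux2 (M : ℕ) : 2 * ∑ k ∈ range (M+1), (k + 1) = (M+1) * (M+2) := by
  induction M with
  | zero => simp
  | succ n ih => rw [Finset.sum_range_succ, Nat.mul_add, ih]; ring

lemma DD_sum (M : ℕ) : 3 * ∑ q ∈ DD M, (q.1 + q.2) = M * (M+1) * (M+2) := by
  rw [DD, Finset.sum_biUnion (DD_disj M)]
  have h1 : ∀ k : ℕ, ∑ q ∈ antidiagonal k, (q.1 + q.2) = (k+1) * k := by
    intro k
    rw [Finset.sum_congr rfl (fun q hq => Finset.HasAntidiagonal.mem_antidiagonal.mp hq),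
      Finset.sum_const, Finset.Nat.card_antidiagonal, smul_eq_mul]
  rw [Finset.sum_congr rfl (fun k _ => h1 k)]
  exact aux3 M

lemma DD_card (M : ℕ) : 2 * (DD M).card = (M+1) * (M+2) := by
  rw [DD, Finset.card_biUnion (fun i hi j hj h => DD_disj M hi hj h)]
  simp only [Finset.Nat.card_antidiagonal]
  exact aux2 M

open Set intervalIntegral

section
variable {α L : ℝ}

noncomputable def hfun (α L : ℝ) (z : ℝ) : ℝ :=
  (L - α*z)^3/3 + α*z*(L - α*z)^2/2

noncomputable def Hfun (α L : ℝ) (z : ℝ) : ℝ :=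
  -(L*(L - α*z)^3)/(6*α) + (L - α*z)^4/(24*α)

lemma hfun_cont : Continuous (hfun α L) := by
  unfold hfun; fun_prop

lemma Hfun_deriv (hα : 0 < α) (x : ℝ) : HasDerivAt (Hfun α L) (hfun α L x) x := by
  have hu : HasDerivAt (fun z : ℝ => L - α*z) (-α) x := by
    simpa using ((hasDerivAt_id x).const_mul α).const_sub L
  have h3 : HasDerivAt (fun z : ℝ => (L - α*z)^3) (3 * (L - α*x)^2 * (-α)) x := by
    simpa using hu.fun_pow 3
  have h4 : HasDerivAt (fun z : ℝ => (L - α*z)^4) (4 * (L - α*x)^3 * (-α)) x := by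
    simpa using hu.fun_pow 4
  have := ((h3.const_mul (-(L)/(6*α)))).fun_add (h4.const_mul (1/(24*α)))
  have heq : (fun z : ℝ => -L/(6*α) * (L - α*z)^3 + 1/(24*α) * (L - α*z)^4) = Hfun α L := by
    funext z; unfold Hfun; field_simp
  rw [heq] at this
  refine this.congr_deriv ?_
  unfold hfun; field_simp; ring

lemma hfun_integral (hα : 0 < α) (a b : ℝ) :
    ∫ z in a..b, hfun α L z = Hfun α L b - Hfun α L a :=
  integral_eq_sub_of_hasDerivAt (fun x _ => Hfun_deriv hα x)
    (hfun_cont.intervalIntegrable a b)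

lemma hfun_anti (hα : 0 < α) (hL : 0 ≤ L) : AntitoneOn (hfun α L) (Icc 0 (L/α)) := by
  intro x hx y hy hxy
  have hx0 : 0 ≤ x := hx.1
  have hy2 : α * y ≤ L := by
    have := hy.2
    rw [le_div_iff₀ hα] at this; linarith [this]
  have hv0 : 0 ≤ L - α*y := by linarith
  have huv : L - α*y ≤ L - α*x := by nlinarith [hα.le]
  have huL : L - α*x ≤ L := by nlinarith [hα.le]
  unfold hfun
  nlinarith [mul_nonneg (sub_nonneg.2 huv) (mul_nonneg hv0 (by linarith : (0:ℝ) ≤ L - (L - α*y))),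
    mul_nonneg (sub_nonneg.2 huv) (mul_nonneg (hv0.trans huv) (by linarith : (0:ℝ) ≤ L - (L - α*x))),
    mul_nonneg (sub_nonneg.2 huv) (mul_nonneg hv0 hv0),
    mul_nonneg (sub_nonneg.2 huv) (mul_nonneg (hv0.trans huv) hv0),
    mul_nonneg (sub_nonneg.2 huv) (mul_nonneg hL hv0),
    mul_nonneg (sub_nonneg.2 huv) (mul_nonneg hL (hv0.trans huv))]

-- key: sum over n in range (N+1) of hfun n ≥ ∫_0^{L/α} hfun, where N = ⌊L/α⌋₊
lemma hfun_sum_ge (hα : 0 < α) (hL : 0 ≤ L) :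
    ∫ z in (0:ℝ)..(L/α), hfun α L z ≤
      ∑ i ∈ Finset.range (⌊L/α⌋₊ + 1), hfun α L i := by
  set N := ⌊L/α⌋₊ with hN
  have hdiv0 : 0 ≤ L / α := div_nonneg hL hα.le
  have hNle : (N:ℝ) ≤ L/α := Nat.floor_le hdiv0
  have hltN : L/α < N + 1 := Nat.lt_floor_add_one _
  have hanti := hfun_anti hα hL
  -- sum ≥ ∫_0^N
  have h1 : ∫ z in (0:ℝ)..(N:ℝ), hfun α L z ≤ ∑ i ∈ Finset.range N, hfun α L i := by
    have := AntitoneOn.integral_le_sum (f := hfun α L) (x₀ := 0) (a := N)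
      (hanti.mono (Set.Icc_subset_Icc le_rfl (by simpa using hNle)))
    simpa using this
  -- h N ≥ 0
  have hN0 : 0 ≤ hfun α L N := by
    have h1' : 0 ≤ L - α*N := by
      have h := hNle
      rw [le_div_iff₀ hα] at h
      nlinarith [h]
    unfold hfun
    have : 0 ≤ α * (N:ℝ) := mul_nonneg hα.le (Nat.cast_nonneg N)
    positivity
  -- tail integral ≤ h N
  have h2 : ∫ z in (N:ℝ)..(L/α), hfun α L z ≤ hfun α L N := by
    have hmono : ∫ z in (N:ℝ)..(L/α), hfun α L z ≤ ∫ z in (N:ℝ)..(L/α), hfun α L N := by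
      apply integral_mono_on hNle (hfun_cont.intervalIntegrable _ _)
        (intervalIntegrable_const)
      intro x hx
      exact hanti ⟨Nat.cast_nonneg N, hNle⟩ ⟨(Nat.cast_nonneg N).trans hx.1, hx.2⟩ hx.1
    rw [integral_const, smul_eq_mul] at hmono
    refine hmono.trans ?_
    nlinarith [hN0]
  calc ∫ z in (0:ℝ)..(L/α), hfun α L z
      = (∫ z in (0:ℝ)..(N:ℝ), hfun α L z) + ∫ z in (N:ℝ)..(L/α), hfun α L z := by
        rw [hfun_integral hα, hfun_integral hα, hfun_integral hα]; ring
    _ ≤ (∑ i ∈ Finset.range N, hfun α L i) + hfun α L N := add_le_add h1 h2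
    _ = ∑ i ∈ Finset.range (N + 1), hfun α L i := (Finset.sum_range_succ _ _).symm

lemma hfun_integral_val (hα : 0 < α) :
    ∫ z in (0:ℝ)..(L/α), hfun α L z = L^4/(8*α) := by
  rw [hfun_integral hα]
  unfold Hfun
  have : L - α * (L/α) = 0 := by field_simp; ring
  rw [this]
  field_simp
  ring
end

lemma slice_bound (m c : ℝ) (hm : 0 ≤ m) (hc : 0 ≤ c) :
    (m^3 - m)/3 + c*m^2/2 ≤ ∑ q ∈ DD ⌊m⌋₊, ((q.1:ℝ) + (q.2:ℝ) + c) := by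
  set M := ⌊m⌋₊ with hM
  have hx1 : (M:ℝ) ≤ m := Nat.floor_le hm
  have hx2 : m < (M:ℝ) + 1 := Nat.lt_floor_add_one m
  have key1 : 3 * ((∑ q ∈ DD M, (q.1 + q.2) : ℕ) : ℝ) = M * (M+1) * (M+2) := by
    exact_mod_cast congrArg (Nat.cast : ℕ → ℝ) (DD_sum M)
  have key2 : 2 * ((DD M).card : ℝ) = (M+1) * (M+2) := by
    exact_mod_cast congrArg (Nat.cast : ℕ → ℝ) (DD_card M)
  have hsum : ∑ q ∈ DD M, ((q.1:ℝ) + (q.2:ℝ) + c)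
      = ((∑ q ∈ DD M, (q.1 + q.2) : ℕ) : ℝ) + ((DD M).card : ℝ) * c := by
    rw [Finset.sum_add_distrib, Finset.sum_const, nsmul_eq_mul]
    push_cast
    rw [Finset.sum_add_distrib]
  rw [hsum]
  set x := (M:ℝ) with hxdef
  have hx0 : 0 ≤ x := Nat.cast_nonneg M
  have e1 : m^2 ≤ (x+1)*(x+2) := by nlinarith
  have e1b : m*(m+1) ≤ (x+1)*(x+2) := by nlinarith
  have e2 : m^3 - m ≤ x*(x+1)*(x+2) := by
    rcases le_or_gt 1 m with h | h
    · nlinarith [mul_nonneg (mul_nonneg hm (by linarith : (0:ℝ) ≤ m+1)) (by linarith : (0:ℝ) ≤ x - (m-1)),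
        mul_nonneg hx0 (sub_nonneg.2 e1b)]
    · nlinarith [mul_nonneg hx0 (mul_nonneg (by linarith : (0:ℝ) ≤ x+1) (by linarith : (0:ℝ) ≤ x+2))]
  nlinarith [mul_le_mul_of_nonneg_left e1 hc]

/-- Marmon, estimate (3.12): for real `α > 0` and `ν > 1`, the sum `f̃` of
`n₁ + n₂ + α·n₃` over all triples of non-negative integers with
`n₁ + n₂ + α·n₃ ≤ ν - 1` satisfies `f̃ ≥ (ν-1)⁴/(8α) - (2+α)(ν+1+α)³/(6α)`. -/
theorem stmt15 (α ν : ℝ) (hα : 0 < α) (hν : 1 < ν) :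
    (ν - 1) ^ 4 / (8 * α) - (2 + α) * (ν + 1 + α) ^ 3 / (6 * α) ≤
      ∑ᶠ p ∈ {p : ℕ × ℕ × ℕ | (p.1 : ℝ) + (p.2.1 : ℝ) + α * (p.2.2 : ℝ) ≤ ν - 1},
        ((p.1 : ℝ) + (p.2.1 : ℝ) + α * (p.2.2 : ℝ)) := by
  set L : ℝ := ν - 1 with hLdef
  have hL : 0 < L := by simp [hLdef]; linarith
  set Sset : Set (ℕ × ℕ × ℕ) :=
    {p | (p.1 : ℝ) + (p.2.1 : ℝ) + α * (p.2.2 : ℝ) ≤ L} with hSdef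
  -- finiteness
  set B : ℕ := ⌊L⌋₊ + ⌊L/α⌋₊ + 1 with hB
  have hfin : Sset.Finite := by
    apply Set.Finite.subset
      (Finset.finite_toSet (Finset.range B ×ˢ Finset.range B ×ˢ Finset.range B))
    intro p hp
    have h1 : (0:ℝ) ≤ (p.1 : ℝ) := Nat.cast_nonneg _
    have h2 : (0:ℝ) ≤ (p.2.1 : ℝ) := Nat.cast_nonneg _
    have h3 : (0:ℝ) ≤ α * (p.2.2 : ℝ) := mul_nonneg hα.le (Nat.cast_nonneg _)
    have hp' : (p.1 : ℝ) + (p.2.1 : ℝ) + α * (p.2.2 : ℝ) ≤ L := hp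
    simp only [Finset.coe_product, Set.mem_prod, Finset.mem_coe, Finset.mem_range]
    refine ⟨?_, ?_, ?_⟩
    · have : (p.1 : ℝ) ≤ L := by linarith
      have := Nat.le_floor this
      omega
    · have : (p.2.1 : ℝ) ≤ L := by linarith
      have := Nat.le_floor this
      omega
    · have : (p.2.2 : ℝ) ≤ L / α := by
        rw [le_div_iff₀ hα]; nlinarith
      have := Nat.le_floor this
      omega
  rw [← Set.Finite.coe_toFinset hfin, finsum_mem_coe_finset]
  set N3 : ℕ := ⌊L/α⌋₊ with hN3
  have hdiv0 : 0 ≤ L / α := div_nonneg hL.le hα.le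
  have hN3le : (N3:ℝ) ≤ L/α := Nat.floor_le hdiv0
  have hN3le' : α * (N3:ℝ) ≤ L := by rw [← le_div_iff₀' hα]; exact hN3le
  -- the comparison finset
  set U : Finset (ℕ × ℕ × ℕ) := (Finset.range (N3+1)).biUnion
    (fun n3 => (DD ⌊L - α*n3⌋₊).image (fun q => (q.1, q.2, n3))) with hU
  have hUsub : U ⊆ hfin.toFinset := by
    intro p hp
    rw [Finset.mem_biUnion] at hp
    obtain ⟨n3, hn3, hp⟩ := hp
    rw [Finset.mem_image] at hp
    obtain ⟨q, hq, rfl⟩ := hp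
    rw [Finset.mem_range, Nat.lt_succ_iff] at hn3
    rw [mem_DD] at hq
    rw [Set.Finite.mem_toFinset]
    show (q.1:ℝ) + (q.2:ℝ) + α * (n3:ℝ) ≤ L
    have hmn : 0 ≤ L - α * (n3:ℝ) := by
      have : α * (n3:ℝ) ≤ α * (N3:ℝ) :=
        mul_le_mul_of_nonneg_left (Nat.cast_le.2 hn3) hα.le
      linarith
    have hfl : ((⌊L - α*(n3:ℝ)⌋₊ : ℕ) : ℝ) ≤ L - α*(n3:ℝ) := Nat.floor_le hmn
    have hq' : ((q.1 + q.2 : ℕ) : ℝ) ≤ ((⌊L - α*(n3:ℝ)⌋₊ : ℕ) : ℝ) := Nat.cast_le.2 hq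
    push_cast at hq'
    linarith
  have hnonneg : ∀ p ∈ hfin.toFinset, 0 ≤ (p.1 : ℝ) + (p.2.1 : ℝ) + α * (p.2.2 : ℝ) := by
    intro p _
    have h3 : (0:ℝ) ≤ α * (p.2.2 : ℝ) := mul_nonneg hα.le (Nat.cast_nonneg _)
    positivity
  have hsub := Finset.sum_le_sum_of_subset_of_nonneg hUsub (fun p hp _ => hnonneg p hp)
  refine le_trans ?_ hsub
  -- compute sum over U
  have hUsum : ∑ p ∈ U, ((p.1 : ℝ) + (p.2.1 : ℝ) + α * (p.2.2 : ℝ))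
      = ∑ n3 ∈ Finset.range (N3+1), ∑ q ∈ DD ⌊L - α*n3⌋₊, ((q.1:ℝ) + (q.2:ℝ) + α * (n3:ℝ)) := by
    rw [hU, Finset.sum_biUnion]
    · refine Finset.sum_congr rfl fun n3 _ => ?_
      rw [Finset.sum_image]
      intro q _ q' _ h
      simpa [Prod.ext_iff] using h
    · intro i _ j _ hij
      simp only [Finset.disjoint_left]
      intro p hp hp'
      rw [Finset.mem_image] at hp hp'
      obtain ⟨q, _, rfl⟩ := hp
      obtain ⟨q', _, h⟩ := hp'
      have hji : j = i := congrArg (fun r : ℕ × ℕ × ℕ => r.2.2) h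
      exact hij hji.symm
  rw [hUsum]
  -- per-slice lower bound
  have hslice : ∀ n3 ∈ Finset.range (N3+1),
      hfun α L n3 - (L - α*n3)/3 ≤ ∑ q ∈ DD ⌊L - α*n3⌋₊, ((q.1:ℝ) + (q.2:ℝ) + α * (n3:ℝ)) := by
    intro n3 hn3
    rw [Finset.mem_range, Nat.lt_succ_iff] at hn3
    have hmn : 0 ≤ L - α * (n3:ℝ) := by
      have : α * (n3:ℝ) ≤ α * (N3:ℝ) :=
        mul_le_mul_of_nonneg_left (Nat.cast_le.2 hn3) hα.le
      linarith
    have hc : 0 ≤ α * (n3:ℝ) := mul_nonneg hα.le (Nat.cast_nonneg _)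
    calc hfun α L n3 - (L - α*n3)/3
        = ((L - α*(n3:ℝ))^3 - (L - α*(n3:ℝ)))/3 + (α*(n3:ℝ))*(L - α*(n3:ℝ))^2/2 := by
          unfold hfun; ring
      _ ≤ _ := slice_bound (L - α*(n3:ℝ)) (α*(n3:ℝ)) hmn hc
  refine le_trans ?_ (Finset.sum_le_sum hslice)
  rw [Finset.sum_sub_distrib]
  -- bound the two sums
  have hint : L^4/(8*α) ≤ ∑ n3 ∈ Finset.range (N3+1), hfun α L n3 := by
    have := hfun_sum_ge (α := α) (L := L) hα hL.le
    rw [hfun_integral_val hα] at this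
    exact this
  have hcorr : ∑ n3 ∈ Finset.range (N3+1), (L - α*(n3:ℝ))/3 ≤ (N3+1) * (L/3) := by
    calc ∑ n3 ∈ Finset.range (N3+1), (L - α*(n3:ℝ))/3
        ≤ ∑ _n3 ∈ Finset.range (N3+1), L/3 := by
          refine Finset.sum_le_sum fun i _ => ?_
          have : 0 ≤ α * (i:ℝ) := mul_nonneg hα.le (Nat.cast_nonneg _)
          linarith
      _ = (N3+1) * (L/3) := by
          rw [Finset.sum_const, Finset.card_range, nsmul_eq_mul]; push_cast; ring
  have hfinal : (ν - 1) ^ 4 / (8 * α) - (2 + α) * (ν + 1 + α) ^ 3 / (6 * α)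
      ≤ L^4/(8*α) - (N3+1) * (L/3) := by
    have hv : ν + 1 + α = L + 2 + α := by rw [hLdef]; ring
    rw [hv, ← hLdef]
    have h1 : (N3:ℝ) + 1 ≤ L/α + 1 := by linarith
    have h2 : ((N3:ℝ)+1) * (L/3) ≤ (L/α + 1) * (L/3) :=
      mul_le_mul_of_nonneg_right h1 (by linarith)
    have h3 : (L/α + 1) * (L/3) ≤ (2 + α) * (L + 2 + α) ^ 3 / (6 * α) := by
      have key : 2*(L*(L+α)) ≤ (2+α)*(L+2+α)^3 := by
        nlinarith [sq_nonneg (L+α), mul_nonneg hα.le (sq_nonneg (L+α)),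
          mul_nonneg (by linarith : (0:ℝ) ≤ L+α) (sq_nonneg (L+α)), hL.le, hα.le,
          mul_pos hL hα]
      have heq : (L/α + 1) * (L/3) = 2*(L*(L+α)) / (6*α) := by field_simp; ring
      rw [heq]
      gcongr
    linarith
  refine le_trans hfinal ?_
  have := sub_le_sub hint hcorr
  linarith [hint, hcorr]
end

section
/- Let k ≥ 4 be an integer, a1, a2, a3, a4 nonzero integers and N a positive integer. Let X = {x ∈ ℂ⁴ : a1·x1^k + a2·x2^k + a3·x3^k + a4·x4^k = N}, and let V ⊆ ℂ⁴ be the union of the sets V_i = {x : ai·xi^k = N and Σ_{j≠i} aj·xj^k = 0} for 1 ≤ i ≤ 4 and W_{i,j} = {x : ai·xi^k + aj·xj^k = N and Σ_{ℓ≠i,j} aℓ·xℓ^k = 0} for 1 ≤ i < j ≤ 4. Then V equals the union of all affine complex lines contained in X; that is, a point p ∈ X lies on some line L = {p + t·v : t ∈ ℂ} (with v ∈ ℂ⁴, v ≠ 0) entirely contained in X if and only if p ∈ V. -/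
open Polynomial

private lemma psum_zero (w r : Fin 4 → ℂ)
    (h0 : ∑ i, w i * r i ^ 0 = 0) (h1 : ∑ i, w i * r i ^ 1 = 0)
    (h2 : ∑ i, w i * r i ^ 2 = 0) (h3 : ∑ i, w i * r i ^ 3 = 0) :
    ∀ n, ∑ i, w i * r i ^ n = 0 := by
  suffices H : ∀ n, (∑ i, w i * r i ^ n = 0) ∧ (∑ i, w i * r i ^ (n+1) = 0) ∧
      (∑ i, w i * r i ^ (n+2) = 0) ∧ (∑ i, w i * r i ^ (n+3) = 0) from fun n => (H n).1
  intro n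
  induction n with
  | zero => exact ⟨by simpa using h0, by simpa using h1, by simpa using h2, by simpa using h3⟩
  | succ m ih =>
    obtain ⟨q0, q1, q2, q3⟩ := ih
    refine ⟨q1, q2, q3, ?_⟩
    simp only [Fin.sum_univ_four] at q0 q1 q2 q3 ⊢
    simp only [show m + 1 + 3 = m + 4 from by omega]
    linear_combination (r 0 + r 1 + r 2 + r 3) * q3
      - (r 0 * r 1 + r 0 * r 2 + r 0 * r 3 + r 1 * r 2 + r 1 * r 3 + r 2 * r 3) * q2
      + (r 0 * r 1 * r 2 + r 0 * r 1 * r 3 + r 0 * r 2 * r 3 + r 1 * r 2 * r 3) * q1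
      - (r 0 * r 1 * r 2 * r 3) * q0

private lemma coeffs (k : ℕ) (c p v : Fin 4 → ℂ) (M : ℂ)
    (h : ∀ t : ℂ, ∑ i, c i * (p i + t * v i) ^ k = M)
    (j : ℕ) (hj : j < k) :
    ∑ i, (c i * v i ^ k) * (if v i = 0 then 0 else p i / v i) ^ j = 0 := by
  set P : ℂ[X] := (∑ i, C (c i) * (C (p i) + X * C (v i)) ^ k) - C M with hPdef
  have hP : P = 0 := by
    apply Polynomial.funext
    intro t
    simp only [hPdef, eval_sub, eval_finset_sum, eval_mul, eval_add, eval_pow, eval_C, eval_X,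
      eval_zero]
    rw [h t]; ring
  have hc0 : P.coeff (k - j) = 0 := by rw [hP]; simp
  have hkj : k - j ≠ 0 := by omega
  have hco : ∀ i : Fin 4, ((C (p i) + X * C (v i)) ^ k).coeff (k - j)
      = (v i ^ k * (if v i = 0 then 0 else p i / v i) ^ j) * (k.choose (k - j) : ℂ) := by
    intro i
    by_cases hv : v i = 0
    · rw [hv]
      simp only [map_zero, mul_zero, add_zero, ← C_pow, coeff_C, if_neg hkj, if_pos rfl]
      rw [zero_pow (by omega : k ≠ 0)]
      ring
    · have hrw : C (p i) + X * C (v i) = C (v i) * (X + C (p i / v i)) := by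
        rw [mul_add, ← C_mul, mul_div_cancel₀ _ hv]
        ring
      rw [hrw, mul_pow, ← C_pow, coeff_C_mul, coeff_X_add_C_pow, if_neg hv,
        show k - (k - j) = j from by omega]
      ring
  rw [hPdef, coeff_sub, finset_sum_coeff, coeff_C, if_neg hkj, sub_zero] at hc0
  simp only [coeff_C_mul, hco] at hc0
  have hch : (k.choose (k - j) : ℂ) ≠ 0 := by
    exact_mod_cast Nat.cast_ne_zero.mpr (Nat.choose_pos (by omega : k - j ≤ k)).ne'
  have h2 : (∑ i, (c i * v i ^ k) * (if v i = 0 then 0 else p i / v i) ^ j)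
      * (k.choose (k - j) : ℂ) = 0 := by
    rw [Finset.sum_mul]
    refine Eq.trans ?_ hc0
    exact Finset.sum_congr rfl fun i _ => by ring
  exact (mul_eq_zero.mp h2).resolve_right hch

private lemma line_exists (k : ℕ) (hk : k ≠ 0) (c p : Fin 4 → ℂ) (hc : ∀ i, c i ≠ 0)
    (M : ℂ) (T : Finset (Fin 4)) (hT : 1 < T.card)
    (h0 : ∑ l ∈ T, c l * p l ^ k = 0) (hM : ∑ l ∈ Tᶜ, c l * p l ^ k = M) :
    ∃ v : Fin 4 → ℂ, v ≠ 0 ∧ ∀ t : ℂ, ∑ i, c i * (p i + t * v i) ^ k = M := by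
  by_cases hq : ∀ l ∈ T, p l = 0
  · obtain ⟨j₁, hj₁, j₂, hj₂, hne⟩ := Finset.one_lt_card.mp hT
    obtain ⟨z, hz⟩ := IsAlgClosed.exists_pow_nat_eq (-(c j₁ / c j₂)) (Nat.pos_of_ne_zero hk)
    refine ⟨fun l => if l = j₁ then 1 else if l = j₂ then z else 0, ?_, ?_⟩
    · intro hv0
      have := congrFun hv0 j₁
      simp at this
    · intro t
      rw [← Finset.sum_add_sum_compl T]
      have hTsum : ∑ l ∈ T, c l * (p l + t * (if l = j₁ then 1 else if l = j₂ then z else 0)) ^ k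
          = 0 := by
        rw [← Finset.sum_subset (Finset.insert_subset_iff.mpr ⟨hj₁,
            Finset.singleton_subset_iff.mpr hj₂⟩) (f := fun l =>
            c l * (p l + t * (if l = j₁ then 1 else if l = j₂ then z else 0)) ^ k)]
        · rw [Finset.sum_insert (by simpa using hne), Finset.sum_singleton,
            if_pos rfl, if_neg (Ne.symm hne), if_pos rfl, hq j₁ hj₁, hq j₂ hj₂]
          have hcj₂ : c j₂ ≠ 0 := hc j₂
          simp only [zero_add, mul_one]
          rw [mul_pow, hz]
          linear_combination (-(c j₁) * t ^ k) * (mul_inv_cancel₀ hcj₂)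
        · intro x hx hnx
          simp only [Finset.mem_insert, Finset.mem_singleton, not_or] at hnx
          rw [if_neg hnx.1, if_neg hnx.2, hq x hx]
          simp [zero_pow hk]
      rw [hTsum, zero_add, ← hM]
      refine Finset.sum_congr rfl fun l hl => ?_
      have hl1 : l ≠ j₁ := fun h => (Finset.mem_compl.mp hl) (h ▸ hj₁)
      have hl2 : l ≠ j₂ := fun h => (Finset.mem_compl.mp hl) (h ▸ hj₂)
      simp only [if_neg hl1, if_neg hl2, mul_zero, add_zero]
  · push_neg at hq
    obtain ⟨l₀, hl₀T, hl₀⟩ := hq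
    refine ⟨fun l => if l ∈ T then p l else 0, ?_, ?_⟩
    · intro hv0
      have := congrFun hv0 l₀
      simp only [if_pos hl₀T, Pi.zero_apply] at this
      exact hl₀ this
    · intro t
      rw [← Finset.sum_add_sum_compl T]
      have hTsum : ∑ l ∈ T, c l * (p l + t * (if l ∈ T then p l else 0)) ^ k
          = (1 + t) ^ k * ∑ l ∈ T, c l * p l ^ k := by
        rw [Finset.mul_sum]
        refine Finset.sum_congr rfl fun l hl => ?_
        simp only [if_pos hl]
        rw [show p l + t * p l = p l * (1 + t) from by ring, mul_pow]
        ring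
      rw [hTsum, h0, mul_zero, zero_add, ← hM]
      refine Finset.sum_congr rfl fun l hl => ?_
      simp only [if_neg (Finset.mem_compl.mp hl), mul_zero, add_zero]

/-- Marmon, Section 5 (description of the lines on `X`): for `k ≥ 4`, nonzero
integers `a₁,…,a₄` and a positive integer `N`, a point `p` of the affine complex
hypersurface `X : a₁x₁^k + ⋯ + a₄x₄^k = N` lies on an affine line entirely
contained in `X` if and only if `p` belongs to one of the subvarieties `Vᵢ`
(`aᵢxᵢ^k = N`, `∑_{j≠i} aⱼxⱼ^k = 0`) or `W_{i,j}` (`aᵢxᵢ^k + aⱼxⱼ^k = N`,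
`∑_{l≠i,j} a_l x_l^k = 0`, `i < j`). -/
theorem stmt19 (k : ℕ) (hk : 4 ≤ k) (a : Fin 4 → ℤ) (ha : ∀ i, a i ≠ 0)
    (N : ℕ) (hN : 0 < N) :
    ∀ p : Fin 4 → ℂ, (∑ i, (a i : ℂ) * p i ^ k) = (N : ℂ) →
      ((∃ v : Fin 4 → ℂ, v ≠ 0 ∧
          ∀ t : ℂ, (∑ i, (a i : ℂ) * (p i + t * v i) ^ k) = (N : ℂ)) ↔
        ((∃ i, (a i : ℂ) * p i ^ k = (N : ℂ) ∧
            (∑ j ∈ Finset.univ.erase i, (a j : ℂ) * p j ^ k) = 0) ∨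
         (∃ i j, i < j ∧
            (a i : ℂ) * p i ^ k + (a j : ℂ) * p j ^ k = (N : ℂ) ∧
            (∑ l ∈ (Finset.univ.erase i).erase j, (a l : ℂ) * p l ^ k) = 0))) := by
  intro p hp
  have hcne : ∀ i, (a i : ℂ) ≠ 0 := fun i => Int.cast_ne_zero.mpr (ha i)
  have hNne : (N : ℂ) ≠ 0 := Nat.cast_ne_zero.mpr hN.ne'
  have hk0 : k ≠ 0 := by omega
  constructor
  · rintro ⟨v, hv, hline⟩
    have hQ : ∀ n, ∑ i, ((a i : ℂ) * v i ^ k) * (if v i = 0 then 0 else p i / v i) ^ n = 0 :=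
      psum_zero _ _
        (coeffs k _ p v _ hline 0 (by omega)) (coeffs k _ p v _ hline 1 (by omega))
        (coeffs k _ p v _ hline 2 (by omega)) (coeffs k _ p v _ hline 3 (by omega))
    classical
    set S : Finset (Fin 4) := Finset.univ.filter (fun i => v i ≠ 0) with hSdef
    have hmemS : ∀ i, i ∈ S ↔ v i ≠ 0 := fun i => by simp [hSdef]
    have hQk : ∑ i ∈ S, (a i : ℂ) * p i ^ k = 0 := by
      rw [hSdef, Finset.sum_filter]
      refine Eq.trans ?_ (hQ k)
      refine Finset.sum_congr rfl fun i _ => ?_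
      by_cases hvi : v i = 0
      · simp [hvi, zero_pow hk0]
      · rw [if_pos hvi, if_neg hvi, div_pow]
        field_simp
    have hQ0 : ∑ i ∈ S, (a i : ℂ) * v i ^ k = 0 := by
      rw [hSdef, Finset.sum_filter]
      refine Eq.trans ?_ (hQ 0)
      refine Finset.sum_congr rfl fun i _ => ?_
      by_cases hvi : v i = 0
      · rw [if_neg (by simpa using hvi), hvi, zero_pow hk0, mul_zero, pow_zero, mul_one]
      · rw [if_pos hvi, pow_zero, mul_one]
    have hcompl : ∑ i ∈ Sᶜ, (a i : ℂ) * p i ^ k = (N : ℂ) := by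
      linear_combination (Finset.sum_add_sum_compl S (fun i => (a i : ℂ) * p i ^ k)) + hp - hQk
    have hcard : S.card = 0 ∨ S.card = 1 ∨ S.card = 2 ∨ S.card = 3 ∨ S.card = 4 := by
      have := S.card_le_univ
      simp only [Finset.card_univ, Fintype.card_fin] at this
      omega
    rcases hcard with h | h | h | h | h
    · exfalso
      apply hv
      funext i
      have : i ∉ S := by rw [Finset.card_eq_zero.mp h]; exact Finset.notMem_empty i
      simpa using (not_not.mp (fun hne => this ((hmemS i).mpr hne)))
    · exfalso
      obtain ⟨i, hi⟩ := Finset.card_eq_one.mp h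
      have hiS : i ∈ S := by rw [hi]; exact Finset.mem_singleton_self i
      have hvi : v i ≠ 0 := (hmemS i).mp hiS
      rw [hi, Finset.sum_singleton] at hQ0
      exact (mul_ne_zero (hcne i) (pow_ne_zero k hvi)) hQ0
    · -- |S| = 2 : W case
      right
      have hcc : Sᶜ.card = 2 := by
        rw [Finset.card_compl, h]
        simp
      obtain ⟨i, j, hij, hSc⟩ := Finset.card_eq_two.mp hcc
      have key : ∀ i j : Fin 4, i < j → Sᶜ = {i, j} →
          ∃ i' j', i' < j' ∧ (a i' : ℂ) * p i' ^ k + (a j' : ℂ) * p j' ^ k = (N : ℂ) ∧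
            (∑ l ∈ (Finset.univ.erase i').erase j', (a l : ℂ) * p l ^ k) = 0 := by
        intro i j hij hSc
        refine ⟨i, j, hij, ?_, ?_⟩
        · rw [hSc, Finset.sum_pair hij.ne] at hcompl
          exact hcompl
        · have hE : (Finset.univ.erase i).erase j = S := by
            rw [← compl_compl S, hSc]
            rw [show ({i, j} : Finset (Fin 4)) = insert i {j} from rfl, Finset.compl_insert,
              Finset.compl_singleton, Finset.erase_right_comm]
          rw [hE]
          exact hQk
      rcases lt_or_gt_of_ne hij with hlt | hgt
      · exact key i j hlt hSc
      · exact key j i hgt (hSc.trans (Finset.pair_comm i j))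
    · -- |S| = 3 : V case
      left
      have hcc : Sᶜ.card = 1 := by
        rw [Finset.card_compl, h]
        simp
      obtain ⟨i, hSc⟩ := Finset.card_eq_one.mp hcc
      refine ⟨i, ?_, ?_⟩
      · rw [hSc, Finset.sum_singleton] at hcompl
        exact hcompl
      · have hE : Finset.univ.erase i = S := by
          rw [← compl_compl S, hSc, Finset.compl_singleton]
        rw [hE]
        exact hQk
    · exfalso
      have : S = Finset.univ := Finset.eq_univ_of_card S (by rw [h]; simp)
      rw [this] at hQk
      exact hNne (hp.symm.trans hQk)
  · rintro (⟨i, hVi, hV0⟩ | ⟨i, j, hij, hW, hW0⟩)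
    · refine line_exists k hk0 _ p hcne _ (Finset.univ.erase i) ?_ hV0 ?_
      · rw [Finset.card_erase_of_mem (Finset.mem_univ i)]
        simp
      · rw [Finset.compl_erase]
        simp only [Finset.compl_univ, insert_empty_eq, Finset.sum_singleton]
        exact hVi
    · refine line_exists k hk0 _ p hcne _ ((Finset.univ.erase i).erase j) ?_ hW0 ?_
      · rw [Finset.card_erase_of_mem (Finset.mem_erase.mpr ⟨hij.ne', Finset.mem_univ j⟩),
          Finset.card_erase_of_mem (Finset.mem_univ i)]
        simp
      · rw [Finset.compl_erase, Finset.compl_erase]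
        simp only [Finset.compl_univ, insert_empty_eq]
        rw [Finset.sum_insert (by simp [hij.ne']), Finset.sum_singleton]
        linear_combination hW
end
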